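/- arXiv:2601.09955 — 6 statements merged into one kernel-verified Lean document; each statement's English description precedes it below -/
import Mathlib

section
/- Let q be a prime power and n ≥ 1 a divisor of q−1 such that q(q−1)/n is even. Suppose the cyclic group of order n has a difference set (possibly trivial) with parameters (n,k,λ). Then there exists a divisible design graph with parameters (n(q+1), kq, λq, k²(q−1)/n, q+1, n). -/
set_option linter.unusedSectionVars false
set_option linter.unnecessarySeqFocus false
set_option maxHeartbeats 1000000

open Classical Finset


namespace DDGaux

variable {F : Type} [Field F] [Fintype F]

def det2 (v w : F × F) : F := v.1 * w.2 - v.2 * w.1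

def pt : Option F → F × F
  | none => (1, 0)
  | some a => (a, 1)

lemma det2_swap (v w : F × F) : det2 w v = - det2 v w := by
  simp only [det2]; ring

lemma det2_self (v : F × F) : det2 v v = 0 := by
  simp only [det2]; ring

lemma pluecker (a b c d : F × F) :
    det2 a b * det2 c d - det2 a c * det2 b d + det2 a d * det2 b c = 0 := by
  simp only [det2]; ring

lemma det2_pt_ne_zero {i j : Option F} (h : i ≠ j) : det2 (pt i) (pt j) ≠ 0 := by
  match i, j with
  | none, none => exact absurd rfl h
  | none, some b => simp [det2, pt]
  | some a, none => simp [det2, pt]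
  | some a, some b =>
    simp only [det2, pt, mul_one, one_mul]
    exact sub_ne_zero.mpr (fun hab => h (by rw [hab]))

lemma fiber_card_mul {G H : Type*} [Group G] [Fintype G] [Group H] [Fintype H]
    [DecidableEq H] (f : G →* H) (hf : Function.Surjective f) (h : H) :
    (Finset.univ.filter fun x => f x = h).card * Fintype.card H = Fintype.card G := by
  have key : ∀ h' : H, (Finset.univ.filter fun x => f x = h').card
      = (Finset.univ.filter fun x => f x = h).card := by
    intro h'
    obtain ⟨a, ha⟩ := hf (h'⁻¹ * h)
    refine Finset.card_bij' (fun x _ => x * a) (fun y _ => y * a⁻¹) ?_ ?_ ?_ ?_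
    · intro x hx
      simp only [Finset.mem_filter, Finset.mem_univ, true_and] at hx ⊢
      rw [map_mul, hx, ha, mul_inv_cancel_left]
    · intro y hy
      simp only [Finset.mem_filter, Finset.mem_univ, true_and] at hy ⊢
      rw [map_mul, hy, map_inv, ha]
      group
    · intro x _; simp
    · intro y _; simp
  have h1 : (Finset.univ : Finset G).card
      = ∑ h' : H, ((Finset.univ : Finset G).filter fun x => f x = h').card :=
    Finset.card_eq_sum_card_fiberwise (fun x _ => Finset.mem_univ (f x))
  have h2 : Fintype.card G = ∑ h' : H, ((Finset.univ : Finset G).filter fun x => f x = h').card := by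
    rw [← Finset.card_univ (α := G)]; exact h1
  rw [h2]
  simp only [key]
  rw [Finset.sum_const, Finset.card_univ, smul_eq_mul, mul_comm]



lemma exists_chi (q n : ℕ) [NeZero n] (hF : Fintype.card F = q)
    (hnd : n ∣ q - 1) (heven : Even (q * ((q - 1) / n))) :
    ∃ χ : Fˣ →* Multiplicative (ZMod n),
      χ (-1) = 1 ∧
      ∀ c : ZMod n,
        (Finset.univ.filter fun x : Fˣ => χ x = Multiplicative.ofAdd c).card = (q - 1) / n := by
  have hq2 : 2 ≤ q := hF ▸ Fintype.one_lt_card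
  obtain ⟨g, hg⟩ := IsCyclic.exists_generator (α := Fˣ)
  have hord : orderOf g = q - 1 := by
    rw [orderOf_eq_card_of_forall_mem_zpowers hg, Nat.card_eq_fintype_card,
      Fintype.card_units, hF]
  have hdvd : orderOf (Multiplicative.ofAdd (1 : ZMod n)) ∣ orderOf g := by
    rw [orderOf_ofAdd_eq_addOrderOf, ZMod.addOrderOf_one, hord]; exact hnd
  set χ : Fˣ →* Multiplicative (ZMod n) := monoidHomOfForallMemZpowers hg hdvd with hχ
  have hχg : χ g = Multiplicative.ofAdd 1 := monoidHomOfForallMemZpowers_apply_gen hg hdvd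
  have hpow : ∀ j : ℕ, χ (g ^ j) = Multiplicative.ofAdd (j : ZMod n) := by
    intro j
    rw [map_pow, hχg, ← ofAdd_nsmul]
    congr 1
    simp [nsmul_eq_mul]
  have hsurj : Function.Surjective χ := by
    intro c
    refine ⟨g ^ (Multiplicative.toAdd c).val, ?_⟩
    rw [hpow, ZMod.natCast_rightInverse _]
    rfl
  have hcardH : Fintype.card (Multiplicative (ZMod n)) = n := by
    rw [Fintype.card_congr (Multiplicative.toAdd (α := ZMod n)), ZMod.card]
  have hfib : ∀ c : ZMod n,
      (Finset.univ.filter fun x : Fˣ => χ x = Multiplicative.ofAdd c).card = (q - 1) / n := by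
    intro c
    have h1 := fiber_card_mul χ hsurj (Multiplicative.ofAdd c)
    rw [hcardH, Fintype.card_units, hF] at h1
    have hn0 : 0 < n := Nat.pos_of_ne_zero (NeZero.ne n)
    exact (Nat.div_eq_of_eq_mul_left hn0 h1.symm).symm
  refine ⟨χ, ?_, hfib⟩
  by_cases h1 : (-1 : Fˣ) = 1
  · rw [h1, map_one]
  · -- q odd case
    have ho2 : orderOf (-1 : Fˣ) = 2 := by
      refine orderOf_eq_prime ?_ h1
      simp
    have h2dvd : 2 ∣ q - 1 := by
      have h := orderOf_dvd_card (x := (-1 : Fˣ))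
      rwa [ho2, Fintype.card_units, hF] at h
    have hqodd : ¬ Even q := by
      rcases h2dvd with ⟨c, hc⟩
      intro ⟨d, hd⟩
      omega
    have hm'even : Even ((q - 1) / n) := by
      rcases Nat.even_mul.mp heven with h | h
      · exact absurd h hqodd
      · exact h
    obtain ⟨c, hc⟩ := hm'even
    have hN : n * ((q - 1) / n) = q - 1 := Nat.mul_div_cancel' hnd
    have hNval : q - 1 = 2 * (n * c) := by rw [← hN, hc]; ring
    have hhalf : (q - 1) / 2 = n * c := by
      rw [hNval]; exact Nat.mul_div_cancel_left _ (by norm_num)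
    set z : Fˣ := g ^ ((q - 1) / 2) with hz
    have hz2 : z ^ 2 = 1 := by
      rw [hz, ← pow_mul, Nat.div_mul_cancel h2dvd, ← hord, pow_orderOf_eq_one]
    have hNpos : 2 ≤ q - 1 := by omega
    have hzne : z ≠ 1 := by
      intro hz1
      have hle := orderOf_le_of_pow_eq_one (n := (q - 1) / 2) (by omega) (hz ▸ hz1)
      rw [hord] at hle
      omega
    have hzF : ((z : F)) ^ 2 = 1 := by
      rw [← Units.val_pow_eq_pow_val, hz2, Units.val_one]
    have hcases : ((z : F) - 1) * ((z : F) + 1) = 0 := by ring_nf; linear_combination hzF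
    have hzneg : z = -1 := by
      rcases mul_eq_zero.mp hcases with h | h
      · exact absurd (Units.ext (by rw [sub_eq_zero] at h; simpa using h)) hzne
      · apply Units.ext
        have : (z : F) = -1 := eq_neg_of_add_eq_zero_left h
        simpa using this
    have : χ (-1) = Multiplicative.ofAdd (((q - 1) / 2 : ℕ) : ZMod n) := by
      rw [← hzneg, hz, hpow]
    rw [this, hhalf]
    have : ((n * c : ℕ) : ZMod n) = 0 := by
      push_cast
      simp [ZMod.natCast_self]
    rw [this]
    rfl


variable {n : ℕ} [NeZero n]

def P2 (D : Finset (ZMod n)) (c : ZMod n) : ℕ :=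
  ((D ×ˢ D).filter fun x : ZMod n × ZMod n => x.1 - x.2 = c).card

lemma P2_zero (D : Finset (ZMod n)) : P2 D 0 = D.card := by
  refine Finset.card_bij' (fun x _ => x.1) (fun d _ => (d, d)) ?_ ?_ ?_ ?_
  · intro x hx
    simp only [P2, Finset.mem_filter, Finset.mem_product] at hx
    exact hx.1.1
  · intro d hd
    simp only [P2, Finset.mem_filter, Finset.mem_product]
    exact ⟨⟨hd, hd⟩, by ring⟩
  · intro x hx
    simp only [P2, Finset.mem_filter, Finset.mem_product] at hx
    have h2 : x.1 = x.2 := by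
      have := hx.2
      rwa [sub_eq_zero] at this
    exact Prod.ext rfl h2
  · intro d _; rfl

lemma P2_sum (D : Finset (ZMod n)) : ∑ c : ZMod n, P2 D c = D.card ^ 2 := by
  have h := Finset.card_eq_sum_card_fiberwise
    (f := fun x : ZMod n × ZMod n => x.1 - x.2) (s := D ×ˢ D) (t := Finset.univ)
    (fun x _ => Finset.mem_univ _)
  rw [Finset.card_product] at h
  calc ∑ c : ZMod n, P2 D c
      = ∑ b : ZMod n, ((D ×ˢ D).filter fun a : ZMod n × ZMod n => a.1 - a.2 = b).card := rfl
    _ = D.card * D.card := h.symm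
    _ = D.card ^ 2 := by ring

lemma count_u (D : Finset (ZMod n)) (c₁ c₂ s t : ZMod n) :
    (Finset.univ.filter fun u : ZMod n => c₁ + s + u ∈ D ∧ c₂ + u + t ∈ D).card
      = P2 D ((c₁ + s) - (c₂ + t)) := by
  refine Finset.card_bij' (fun u _ => (c₁ + s + u, c₂ + u + t)) (fun x _ => x.1 - c₁ - s)
    ?_ ?_ ?_ ?_
  · intro u hu
    simp only [Finset.mem_filter, Finset.mem_univ, true_and] at hu
    simp only [P2, Finset.mem_filter, Finset.mem_product]
    exact ⟨⟨hu.1, hu.2⟩, by ring⟩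
  · intro x hx
    simp only [P2, Finset.mem_filter, Finset.mem_product] at hx
    simp only [Finset.mem_filter, Finset.mem_univ, true_and]
    constructor
    · have : c₁ + s + (x.1 - c₁ - s) = x.1 := by ring
      rw [this]; exact hx.1.1
    · have : c₂ + (x.1 - c₁ - s) + t = x.2 := by
        have h := hx.2
        have : x.2 = x.1 - ((c₁ + s) - (c₂ + t)) := by
          rw [← h]; ring
        rw [this]; ring
      rw [this]; exact hx.1.2
  · intro u _; ring
  · intro x hx
    simp only [P2, Finset.mem_filter, Finset.mem_product] at hx
    have h := hx.2
    have h2 : c₂ + (x.1 - c₁ - s) + t = x.2 := by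
      have hx2 : x.2 = x.1 - ((c₁ + s) - (c₂ + t)) := by rw [← h]; ring
      rw [hx2]; ring
    have h1 : c₁ + s + (x.1 - c₁ - s) = x.1 := by ring
    exact Prod.ext h1 h2


lemma fiber_ratio {q n : ℕ} [NeZero n] (hF : Fintype.card F = q)
    (χ : Fˣ →* Multiplicative (ZMod n))
    (hχfib : ∀ c : ZMod n,
      (Finset.univ.filter fun x : Fˣ => χ x = Multiplicative.ofAdd c).card = (q - 1) / n)
    (φ : F → ZMod n)
    (hφ : ∀ (x : F) (h : x ≠ 0), φ x = Multiplicative.toAdd (χ (Units.mk0 x h)))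
    (i j : Option F) (hij : i ≠ j) (c : ZMod n) :
    ((Finset.univ.filter fun m : Option F => m ≠ i ∧ m ≠ j).filter
      fun m => φ (det2 (pt i) (pt m)) - φ (det2 (pt m) (pt j)) = c).card = (q - 1) / n := by
  have hq2 : 2 ≤ q := hF ▸ Fintype.one_lt_card
  set T := Finset.univ.filter fun m : Option F => m ≠ i ∧ m ≠ j with hT
  have hmemT : ∀ {m : Option F}, m ∈ T ↔ (m ≠ i ∧ m ≠ j) := by
    intro m; simp [hT]
  have hd1 : ∀ {m : Option F}, m ∈ T → det2 (pt i) (pt m) ≠ 0 := by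
    intro m hm; exact det2_pt_ne_zero (Ne.symm (hmemT.mp hm).1)
  have hd2 : ∀ {m : Option F}, m ∈ T → det2 (pt m) (pt j) ≠ 0 := by
    intro m hm; exact det2_pt_ne_zero (hmemT.mp hm).2
  set u : Option F → Fˣ := fun m =>
    if h : det2 (pt i) (pt m) ≠ 0 ∧ det2 (pt m) (pt j) ≠ 0 then
      Units.mk0 _ h.1 * (Units.mk0 _ h.2)⁻¹ else 1 with hu
  have hueq : ∀ {m : Option F} (hm : m ∈ T),
      u m = Units.mk0 _ (hd1 hm) * (Units.mk0 _ (hd2 hm))⁻¹ := by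
    intro m hm
    rw [hu]; dsimp only; rw [dif_pos ⟨hd1 hm, hd2 hm⟩]
  have huval : ∀ {m : Option F}, m ∈ T →
      (u m : F) = det2 (pt i) (pt m) * (det2 (pt m) (pt j))⁻¹ := by
    intro m hm
    rw [hueq hm]
    simp
  have hinj : ∀ m ∈ T, ∀ m' ∈ T, u m = u m' → m = m' := by
    intro m hm m' hm' he
    by_contra hne
    have hvv := congrArg Units.val he
    rw [huval hm, huval hm'] at hvv
    have hcross : det2 (pt i) (pt m) * det2 (pt m') (pt j)
        = det2 (pt i) (pt m') * det2 (pt m) (pt j) := by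
      rw [← div_eq_mul_inv, ← div_eq_mul_inv, div_eq_div_iff (hd2 hm) (hd2 hm')] at hvv
      exact hvv
    have hpl := pluecker (pt i) (pt m) (pt m') (pt j)
    have hz : det2 (pt i) (pt j) * det2 (pt m) (pt m') = 0 := by
      linear_combination hpl - hcross
    rcases mul_eq_zero.mp hz with h | h
    · exact det2_pt_ne_zero hij h
    · exact det2_pt_ne_zero hne h
  have hcardT : T.card = q - 1 := by
    have : T = Finset.univ \ ({i, j} : Finset (Option F)) := by
      ext m
      simp [hT, not_or]
    rw [this, Finset.card_sdiff_of_subset (Finset.subset_univ _), Finset.card_univ,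
      Fintype.card_option, hF]
    rw [Finset.card_insert_of_notMem (by simpa using hij), Finset.card_singleton]
    omega
  have himg : T.image u = Finset.univ := by
    apply Finset.eq_univ_of_card
    rw [Finset.card_image_of_injOn (fun m hm m' hm' => hinj m hm m' hm'), hcardT,
      Fintype.card_units, hF]
  have hval : ∀ m ∈ T, φ (det2 (pt i) (pt m)) - φ (det2 (pt m) (pt j))
      = Multiplicative.toAdd (χ (u m)) := by
    intro m hm
    rw [hφ _ (hd1 hm), hφ _ (hd2 hm), hueq hm, map_mul, map_inv]
    simp [sub_eq_add_neg]
  have hset : T.filter (fun m => φ (det2 (pt i) (pt m)) - φ (det2 (pt m) (pt j)) = c)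
      = T.filter (fun m => χ (u m) = Multiplicative.ofAdd c) := by
    apply Finset.filter_congr
    intro m hm
    rw [hval m hm]
    constructor
    · intro h; rw [← h]; rfl
    · intro h; rw [h]; rfl
  rw [hset]
  have hcard : (T.filter fun m => χ (u m) = Multiplicative.ofAdd c).card
      = ((T.image u).filter fun z => χ z = Multiplicative.ofAdd c).card := by
    rw [Finset.filter_image]
    rw [Finset.card_image_of_injOn]
    intro m hm m' hm' he
    exact hinj m (Finset.mem_of_mem_filter _ hm) m' (Finset.mem_of_mem_filter _ hm') he
  rw [hcard, himg, hχfib]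

lemma main (q n k l : ℕ) [NeZero n] (hF : Fintype.card F = q)
    (hnd : n ∣ q - 1) (heven : Even (q * ((q - 1) / n)))
    (D : Finset (ZMod n)) (hD : D.card = k)
    (hDS : ∀ g : ZMod n, g ≠ 0 →
      ((D ×ˢ D).filter (fun x : ZMod n × ZMod n => x.1 - x.2 = g)).card = l) :
    ∃ G : SimpleGraph (Option F × ZMod n),
      (Matrix.of fun a b => if G.Adj a b then (1 : ℤ) else 0) *
          (Matrix.of fun a b => if G.Adj a b then (1 : ℤ) else 0)
        = ((k * q : ℕ) : ℤ) • (1 : Matrix (Option F × ZMod n) (Option F × ZMod n) ℤ)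
          + ((l * q : ℕ) : ℤ) •
              ((Matrix.of fun a b : Option F × ZMod n =>
                if a.1 = b.1 then (1 : ℤ) else 0) - 1)
          + ((k ^ 2 * ((q - 1) / n) : ℕ) : ℤ) •
              ((Matrix.of fun _ _ : Option F × ZMod n => (1 : ℤ))
                - Matrix.of fun a b : Option F × ZMod n =>
                    if a.1 = b.1 then (1 : ℤ) else 0) := by
  classical
  have hq2 : 2 ≤ q := hF ▸ Fintype.one_lt_card
  obtain ⟨χ, hχneg, hχfib⟩ := exists_chi (F := F) q n hF hnd heven
  set φ : F → ZMod n := fun x =>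
    if h : x = 0 then 0 else Multiplicative.toAdd (χ (Units.mk0 x h)) with hφdef
  have hφ : ∀ (x : F) (h : x ≠ 0), φ x = Multiplicative.toAdd (χ (Units.mk0 x h)) := by
    intro x h; rw [hφdef]; dsimp only; rw [dif_neg h]
  have hφneg : ∀ x : F, φ (-x) = φ x := by
    intro x
    by_cases hx : x = 0
    · rw [hx, neg_zero]
    · have hnx : -x ≠ 0 := neg_ne_zero.mpr hx
      rw [hφ _ hnx, hφ _ hx]
      congr 1
      have hmk : Units.mk0 (-x) hnx = -1 * Units.mk0 x hx := by
        apply Units.ext; simp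
      rw [hmk, map_mul, hχneg, one_mul]
  set G : SimpleGraph (Option F × ZMod n) :=
    { Adj := fun a b => a.1 ≠ b.1 ∧ φ (det2 (pt a.1) (pt b.1)) + a.2 + b.2 ∈ D
      symm := by
        constructor
        rintro a b ⟨h1, h2⟩
        refine ⟨h1.symm, ?_⟩
        rw [det2_swap, hφneg, add_right_comm]
        exact h2
      loopless := by constructor; rintro a ⟨h1, _⟩; exact h1 rfl } with hG
  refine ⟨G, ?_⟩
  have hGadj : ∀ a b : Option F × ZMod n,
      G.Adj a b ↔ (a.1 ≠ b.1 ∧ φ (det2 (pt a.1) (pt b.1)) + a.2 + b.2 ∈ D) :=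
    fun a b => Iff.rfl
  clear_value G
  ext ⟨i, s⟩ ⟨j, t⟩
  rw [Matrix.mul_apply]
  -- step 1: LHS as sum of fiber cardinalities
  have hstep1 : ∑ v : Option F × ZMod n,
      (Matrix.of fun a b => if G.Adj a b then (1 : ℤ) else 0) (i, s) v *
      (Matrix.of fun a b => if G.Adj a b then (1 : ℤ) else 0) v (j, t)
    = ∑ m : Option F, (((Finset.univ.filter fun u : ZMod n =>
        G.Adj (i, s) (m, u) ∧ G.Adj (m, u) (j, t))).card : ℤ) := by
    rw [Fintype.sum_prod_type]
    refine Finset.sum_congr rfl fun m _ => ?_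
    rw [← Finset.sum_boole]
    refine Finset.sum_congr rfl fun u _ => ?_
    simp only [Matrix.of_apply]
    rw [ite_zero_mul_ite_zero, one_mul]
  -- per-m evaluation
  have hcnt_eq : ∀ m : Option F, m ≠ i → m ≠ j →
      ((Finset.univ.filter fun u : ZMod n =>
        G.Adj (i, s) (m, u) ∧ G.Adj (m, u) (j, t))).card
      = P2 D ((φ (det2 (pt i) (pt m)) + s) - (φ (det2 (pt m) (pt j)) + t)) := by
    intro m hmi hmj
    rw [← count_u D (φ (det2 (pt i) (pt m))) (φ (det2 (pt m) (pt j))) s t]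
    refine congrArg Finset.card (Finset.filter_congr fun u _ => ?_)
    simp only [hGadj]
    simp [Ne.symm hmi, hmj]
  have hcnt_i : ((Finset.univ.filter fun u : ZMod n =>
      G.Adj (i, s) (i, u) ∧ G.Adj (i, u) (j, t))).card = 0 := by
    rw [Finset.card_eq_zero, Finset.filter_eq_empty_iff]
    intro u _
    rintro ⟨ha, _⟩
    exact ((hGadj _ _).mp ha).1 rfl
  have hcnt_j : ((Finset.univ.filter fun u : ZMod n =>
      G.Adj (i, s) (j, u) ∧ G.Adj (j, u) (j, t))).card = 0 := by
    rw [Finset.card_eq_zero, Finset.filter_eq_empty_iff]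
    intro u _
    rintro ⟨_, hb⟩
    exact ((hGadj _ _).mp hb).1 rfl
  -- RHS entry
  have hRHS : (((k * q : ℕ) : ℤ) • (1 : Matrix (Option F × ZMod n) (Option F × ZMod n) ℤ)
          + ((l * q : ℕ) : ℤ) •
              ((Matrix.of fun a b : Option F × ZMod n =>
                if a.1 = b.1 then (1 : ℤ) else 0) - 1)
          + ((k ^ 2 * ((q - 1) / n) : ℕ) : ℤ) •
              ((Matrix.of fun _ _ : Option F × ZMod n => (1 : ℤ))
                - Matrix.of fun a b : Option F × ZMod n =>
                    if a.1 = b.1 then (1 : ℤ) else 0)) (i, s) (j, t)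
      = ((k * q : ℕ) : ℤ) * (if (i, s) = (j, t) then 1 else 0)
        + ((l * q : ℕ) : ℤ) * ((if i = j then 1 else 0) - (if (i, s) = (j, t) then 1 else 0))
        + ((k ^ 2 * ((q - 1) / n) : ℕ) : ℤ) * (1 - (if i = j then 1 else 0)) := by
    simp only [Matrix.add_apply, Matrix.smul_apply, Matrix.sub_apply, Matrix.one_apply,
      Matrix.of_apply, smul_eq_mul]
  refine hstep1.trans (Eq.trans ?_ hRHS.symm)
  by_cases hij : i = j
  · -- same class
    subst hij
    have hsum : ∑ m : Option F, (((Finset.univ.filter fun u : ZMod n =>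
        G.Adj (i, s) (m, u) ∧ G.Adj (m, u) (i, t))).card : ℤ)
        = ((Finset.univ.filter fun m : Option F => m ≠ i).card : ℤ) * (P2 D (s - t) : ℤ) := by
      rw [← Finset.sum_filter_add_sum_filter_not Finset.univ (fun m : Option F => m ≠ i)]
      have h2 : ∑ m ∈ Finset.univ.filter (fun m : Option F => ¬ m ≠ i),
          (((Finset.univ.filter fun u : ZMod n =>
            G.Adj (i, s) (m, u) ∧ G.Adj (m, u) (i, t))).card : ℤ) = 0 := by
        refine Finset.sum_eq_zero fun m hm => ?_
        simp only [Finset.mem_filter, not_not] at hm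
        rw [hm.2, hcnt_i]
        rfl
      rw [h2, add_zero]
      have h1 : ∀ m ∈ Finset.univ.filter (fun m : Option F => m ≠ i),
          (((Finset.univ.filter fun u : ZMod n =>
            G.Adj (i, s) (m, u) ∧ G.Adj (m, u) (i, t))).card : ℤ) = (P2 D (s - t) : ℤ) := by
        intro m hm
        simp only [Finset.mem_filter] at hm
        rw [hcnt_eq m hm.2 hm.2]
        congr 2
        have hsw : det2 (pt m) (pt i) = - det2 (pt i) (pt m) := det2_swap _ _
        rw [hsw, hφneg]
        ring
      rw [Finset.sum_congr rfl h1, Finset.sum_const, nsmul_eq_mul]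
    rw [hsum]
    have hcard : (Finset.univ.filter fun m : Option F => m ≠ i).card = q := by
      have : (Finset.univ.filter fun m : Option F => m ≠ i)
          = Finset.univ \ ({i} : Finset (Option F)) := by
        ext m; simp
      rw [this, Finset.card_sdiff_of_subset (Finset.subset_univ _), Finset.card_univ,
        Fintype.card_option, hF, Finset.card_singleton]
      omega
    rw [hcard]
    by_cases hst : s = t
    · subst hst
      have : P2 D (s - s) = k := by rw [sub_self, P2_zero, hD]
      rw [this]
      split_ifs <;> push_cast <;> (try ring) <;> simp_all [Prod.ext_iff]
    · have hne : s - t ≠ 0 := sub_ne_zero.mpr hst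
      have : P2 D (s - t) = l := hDS _ hne
      rw [this]
      split_ifs <;> push_cast <;> (try ring) <;> simp_all [Prod.ext_iff]
  · -- different classes
    have hsum : ∑ m : Option F, (((Finset.univ.filter fun u : ZMod n =>
        G.Adj (i, s) (m, u) ∧ G.Adj (m, u) (j, t))).card : ℤ)
        = ∑ m ∈ Finset.univ.filter (fun m : Option F => m ≠ i ∧ m ≠ j),
            (P2 D ((φ (det2 (pt i) (pt m)) - φ (det2 (pt m) (pt j))) + (s - t)) : ℤ) := by
      rw [← Finset.sum_filter_add_sum_filter_not Finset.univ
        (fun m : Option F => m ≠ i ∧ m ≠ j)]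
      have h2 : ∑ m ∈ Finset.univ.filter (fun m : Option F => ¬ (m ≠ i ∧ m ≠ j)),
          (((Finset.univ.filter fun u : ZMod n =>
            G.Adj (i, s) (m, u) ∧ G.Adj (m, u) (j, t))).card : ℤ) = 0 := by
        refine Finset.sum_eq_zero fun m hm => ?_
        simp only [Finset.mem_filter, not_and_or, not_not] at hm
        rcases hm.2 with h | h
        · rw [h, hcnt_i]; rfl
        · rw [h, hcnt_j]; rfl
      rw [h2, add_zero]
      refine Finset.sum_congr rfl fun m hm => ?_
      simp only [Finset.mem_filter] at hm
      rw [hcnt_eq m hm.2.1 hm.2.2]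
      congr 2
      ring
    rw [hsum]
    -- fiberwise
    have hfiber : ∑ m ∈ Finset.univ.filter (fun m : Option F => m ≠ i ∧ m ≠ j),
        (P2 D ((φ (det2 (pt i) (pt m)) - φ (det2 (pt m) (pt j))) + (s - t)) : ℤ)
        = ∑ c : ZMod n, (((q - 1) / n : ℕ) : ℤ) * (P2 D c : ℤ) := by
      rw [← Finset.sum_fiberwise_of_maps_to
        (g := fun m : Option F => (φ (det2 (pt i) (pt m)) - φ (det2 (pt m) (pt j))) + (s - t))
        (fun m _ => Finset.mem_univ _)]
      refine Finset.sum_congr rfl fun c _ => ?_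
      have hinner : ∀ m ∈ (Finset.univ.filter (fun m : Option F => m ≠ i ∧ m ≠ j)).filter
          (fun m => (φ (det2 (pt i) (pt m)) - φ (det2 (pt m) (pt j))) + (s - t) = c),
          (P2 D ((φ (det2 (pt i) (pt m)) - φ (det2 (pt m) (pt j))) + (s - t)) : ℤ)
            = (P2 D c : ℤ) := by
        intro m hm
        rw [(Finset.mem_filter.mp hm).2]
      rw [Finset.sum_congr rfl hinner, Finset.sum_const, nsmul_eq_mul]
      congr 1
      have hcong : (Finset.univ.filter (fun m : Option F => m ≠ i ∧ m ≠ j)).filter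
          (fun m => (φ (det2 (pt i) (pt m)) - φ (det2 (pt m) (pt j))) + (s - t) = c)
          = (Finset.univ.filter (fun m : Option F => m ≠ i ∧ m ≠ j)).filter
          (fun m => φ (det2 (pt i) (pt m)) - φ (det2 (pt m) (pt j)) = c - (s - t)) := by
        refine Finset.filter_congr fun m _ => ?_
        constructor
        · intro h; rw [← h]; ring
        · intro h; rw [h]; ring
      rw [hcong, fiber_ratio hF χ hχfib φ hφ i j hij (c - (s - t))]
    rw [hfiber, ← Finset.mul_sum]
    have hP2sum : ∑ c : ZMod n, (P2 D c : ℤ) = ((k ^ 2 : ℕ) : ℤ) := by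
      rw [← Nat.cast_sum]
      congr 1
      rw [P2_sum, hD]
    rw [hP2sum]
    split_ifs <;> push_cast <;> (try ring) <;> simp_all [Prod.ext_iff]

end DDGaux


open DDGaux

/-- let `q` be a prime power and `n ≥ 1` a divisor of `q−1` with
`q(q−1)/n` even, and suppose the cyclic group of order `n` has a difference set with
parameters `(n, k, λ)`. Then there is a divisible design graph with parameters
`(n(q+1), kq, λq, k²(q−1)/n, q+1, n)`: a graph on `n(q+1)` vertices, partitioned into
`q+1` classes of size `n`, whose adjacency matrix `A` satisfies
`A² = kq·I + λq·(P − I) + (k²(q−1)/n)·(J − P)`, where `P` is the same-class indicator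
matrix. -/
theorem stmt_1 (q n k l : ℕ)
    (hq : ∃ r e : ℕ, r.Prime ∧ 0 < e ∧ q = r ^ e)
    (hn : 1 ≤ n) (hnd : n ∣ q - 1) (heven : Even (q * ((q - 1) / n)))
    (D : Finset (ZMod n)) (hD : D.card = k)
    (hDS : ∀ g : ZMod n, g ≠ 0 →
      ((D ×ˢ D).filter (fun x : ZMod n × ZMod n => x.1 - x.2 = g)).card = l) :
    ∃ (G : SimpleGraph (Fin (n * (q + 1)))) (cls : Fin (n * (q + 1)) → Fin (q + 1)),
      (∀ j : Fin (q + 1), (Finset.univ.filter fun v => cls v = j).card = n) ∧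
      (Matrix.of fun a b => if G.Adj a b then (1 : ℤ) else 0) *
          (Matrix.of fun a b => if G.Adj a b then (1 : ℤ) else 0)
        = ((k * q : ℕ) : ℤ) • (1 : Matrix (Fin (n * (q + 1))) (Fin (n * (q + 1))) ℤ)
          + ((l * q : ℕ) : ℤ) •
              ((Matrix.of fun a b => if cls a = cls b then (1 : ℤ) else 0) - 1)
          + ((k ^ 2 * ((q - 1) / n) : ℕ) : ℤ) •
              ((Matrix.of fun _ _ => (1 : ℤ))
                - Matrix.of fun a b => if cls a = cls b then (1 : ℤ) else 0) := by
  classical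
  haveI : NeZero n := ⟨by omega⟩
  obtain ⟨r, e, hr, he, hqe⟩ := hq
  haveI : Fact r.Prime := ⟨hr⟩
  haveI instF : Fintype (GaloisField r e) := Fintype.ofFinite _
  set F : Type := GaloisField r e with hFdef
  haveI instF' : Fintype F := instF
  haveI : Field F := inferInstanceAs (Field (GaloisField r e))
  have hF : Fintype.card F = q := by
    rw [← Nat.card_eq_fintype_card]
    rw [show Nat.card F = Nat.card (GaloisField r e) from rfl]
    rw [GaloisField.card r e (by omega)]
    exact hqe.symm
  obtain ⟨G0, hG0⟩ := main (F := F) q n k l hF hnd heven D hD hDS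
  -- equivalences
  have hcardV : Fintype.card (Option F × ZMod n) = n * (q + 1) := by
    rw [Fintype.card_prod, Fintype.card_option, hF, ZMod.card]
    ring
  let e2 : (Option F × ZMod n) ≃ Fin (n * (q + 1)) := Fintype.equivFinOfCardEq hcardV
  have hcardO : Fintype.card (Option F) = q + 1 := by
    rw [Fintype.card_option, hF]
  let eOpt : Option F ≃ Fin (q + 1) := Fintype.equivFinOfCardEq hcardO
  refine ⟨{ Adj := fun a b => G0.Adj (e2.symm a) (e2.symm b)
            symm := ⟨fun a b h => G0.adj_symm h⟩
            loopless := ⟨fun a h => G0.irrefl h⟩ },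
          fun v => eOpt (e2.symm v).1, ?_, ?_⟩
  · -- class sizes
    intro j
    have hbij : (Finset.univ.filter fun v : Fin (n * (q + 1)) => eOpt (e2.symm v).1 = j).card
        = (Finset.univ.filter fun w : Option F × ZMod n => eOpt w.1 = j).card := by
      refine Finset.card_bij' (fun v _ => e2.symm v) (fun w _ => e2 w) ?_ ?_ ?_ ?_
      · intro v hv
        simp only [Finset.mem_filter, Finset.mem_univ, true_and] at hv ⊢
        exact hv
      · intro w hw
        simp only [Finset.mem_filter, Finset.mem_univ, true_and] at hw ⊢
        rw [Equiv.symm_apply_apply]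
        exact hw
      · intro v _; exact e2.apply_symm_apply v
      · intro w _; exact e2.symm_apply_apply w
    rw [hbij]
    have hset : (Finset.univ.filter fun w : Option F × ZMod n => eOpt w.1 = j)
        = ({eOpt.symm j} : Finset (Option F)) ×ˢ (Finset.univ : Finset (ZMod n)) := by
      ext ⟨o, z⟩
      simp only [Finset.mem_filter, Finset.mem_univ, true_and, Finset.mem_product,
        Finset.mem_singleton, and_true]
      constructor
      · intro h; rw [← h, Equiv.symm_apply_apply]
      · intro h; rw [h, Equiv.apply_symm_apply]
    rw [hset, Finset.card_product, Finset.card_singleton, Finset.card_univ, ZMod.card,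
      one_mul]
  · -- matrix identity
    have hMsub : (Matrix.of fun a b : Fin (n * (q + 1)) =>
          if G0.Adj (e2.symm a) (e2.symm b) then (1 : ℤ) else 0)
        = (Matrix.of fun a b : Option F × ZMod n =>
            if G0.Adj a b then (1 : ℤ) else 0).submatrix e2.symm e2.symm := rfl
    have hPsub : (Matrix.of fun a b : Fin (n * (q + 1)) =>
          if eOpt (e2.symm a).1 = eOpt (e2.symm b).1 then (1 : ℤ) else 0)
        = (Matrix.of fun a b : Option F × ZMod n =>
            if a.1 = b.1 then (1 : ℤ) else 0).submatrix e2.symm e2.symm := by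
      ext a b
      simp only [Matrix.of_apply, Matrix.submatrix_apply]
      refine if_congr ⟨fun h => eOpt.injective h, fun h => by rw [h]⟩ rfl rfl
    have hJsub : (Matrix.of fun _ _ : Fin (n * (q + 1)) => (1 : ℤ))
        = (Matrix.of fun _ _ : Option F × ZMod n => (1 : ℤ)).submatrix e2.symm e2.symm :=
      rfl
    show (Matrix.of fun a b : Fin (n * (q + 1)) =>
          if G0.Adj (e2.symm a) (e2.symm b) then (1 : ℤ) else 0) *
        (Matrix.of fun a b : Fin (n * (q + 1)) =>
          if G0.Adj (e2.symm a) (e2.symm b) then (1 : ℤ) else 0) = _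
    rw [hMsub, hPsub, hJsub, Matrix.submatrix_mul_equiv, hG0]
    ext a b
    simp only [Matrix.submatrix_apply, Matrix.add_apply, Matrix.smul_apply, Matrix.sub_apply,
      Matrix.one_apply, Matrix.of_apply, smul_eq_mul, EmbeddingLike.apply_eq_iff_eq]
end

section
/- For all h,g ∈ C: B_hB_g = q·A_{h⁻¹g} + m·(J − A_C). Moreover every row and column sum of A_g equals 1 (so r_g has valency 1) and every row and column sum of B_g equals q (so s_g has valency q). -/
open Classical Matrix

namespace Tatra

variable (F : Type) [Field F] [Fintype F] (K : Subgroup Fˣ)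

/-- The equivalence relation on nonzero vectors of `F²` identifying `v` with `x • v` for `x ∈ K`. -/
def ksetoid : Setoid {v : Fin 2 → F // v ≠ 0} where
  r u v := ∃ x : Fˣ, x ∈ K ∧ ((x : F) • u.1 = v.1)
  iseqv := by
    refine ⟨fun u => ⟨1, K.one_mem, by simp⟩, ?_, ?_⟩
    · rintro u v ⟨x, hx, h⟩
      refine ⟨x⁻¹, K.inv_mem hx, ?_⟩
      rw [← h, smul_smul, Units.val_inv_eq_inv_val, inv_mul_cancel₀ x.ne_zero, one_smul]
    · rintro u v w ⟨x, hx, h1⟩ ⟨y, hy, h2⟩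
      refine ⟨y * x, K.mul_mem hy hx, ?_⟩
      rw [Units.val_mul, ← smul_smul, h1, h2]

/-- The point set `Ω` of the Tatra scheme. -/
abbrev Om := Quotient (ksetoid F K)

/-- The cyclic group `C = Fˣ/K`. -/
abbrev CC := Fˣ ⧸ K

noncomputable instance : Fintype (Om F K) := Fintype.ofFinite _

noncomputable instance : Fintype (CC F K) := @Fintype.ofFinite _ (Quotient.finite _)

/-- The relation `r_g = {(α, β) : β = gα}` on `Ω`. -/
def rrel (g : CC F K) : Set (Om F K × Om F K) :=
  {p | ∃ (u v : {w : Fin 2 → F // w ≠ 0}) (y : Fˣ),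
    Quotient.mk (ksetoid F K) u = p.1 ∧ Quotient.mk (ksetoid F K) v = p.2 ∧
    (QuotientGroup.mk y : CC F K) = g ∧ ((y : F) • u.1 = v.1)}

/-- `det(u,v) = u₁v₂ - u₂v₁`. -/
def dt (u v : {w : Fin 2 → F // w ≠ 0}) : F := u.1 0 * v.1 1 - u.1 1 * v.1 0

/-- The relation `s_g = {(Ku, Kv) : det(u,v) ∈ g}` on `Ω`. -/
def srel (g : CC F K) : Set (Om F K × Om F K) :=
  {p | ∃ (u v : {w : Fin 2 → F // w ≠ 0}) (y : Fˣ),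
    Quotient.mk (ksetoid F K) u = p.1 ∧ Quotient.mk (ksetoid F K) v = p.2 ∧
    (QuotientGroup.mk y : CC F K) = g ∧ (y : F) = dt F u v}

/-- Adjacency matrix `A_g` of `r_g`. -/
noncomputable def Amat (g : CC F K) : Matrix (Om F K) (Om F K) ℤ :=
  Matrix.of fun α β => if (α, β) ∈ rrel F K g then 1 else 0

/-- Adjacency matrix `B_g` of `s_g`. -/
noncomputable def Bmat (g : CC F K) : Matrix (Om F K) (Om F K) ℤ :=
  Matrix.of fun α β => if (α, β) ∈ srel F K g then 1 else 0

/-- The all-ones matrix `J`. -/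
noncomputable def Jmat : Matrix (Om F K) (Om F K) ℤ := Matrix.of fun _ _ => 1

/-- `A_C = Σ_{g ∈ C} A_g`. -/
noncomputable def AC : Matrix (Om F K) (Om F K) ℤ := ∑ g : CC F K, Amat F K g

/-- Sum `A_X = Σ_{g ∈ X} A_g` for `X ⊆ C`. -/
noncomputable def AmatX (X : Set (CC F K)) : Matrix (Om F K) (Om F K) ℤ :=
  ∑ g ∈ (Set.toFinite X).toFinset, Amat F K g

/-- Sum `B_Y = Σ_{g ∈ Y} B_g` for `Y ⊆ C`. -/
noncomputable def BmatX (Y : Set (CC F K)) : Matrix (Om F K) (Om F K) ℤ :=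
  ∑ g ∈ (Set.toFinite Y).toFinset, Bmat F K g

/-- `r_X = ∪_{g ∈ X} r_g`. -/
def rrelX (X : Set (CC F K)) : Set (Om F K × Om F K) := ⋃ g ∈ X, rrel F K g

/-- `s_Y = ∪_{g ∈ Y} s_g`. -/
def srelX (Y : Set (CC F K)) : Set (Om F K × Om F K) := ⋃ g ∈ Y, srel F K g

/-- The line `Cα` through a point `α ∈ Ω`. -/
def line (α : Om F K) : Set (Om F K) := {β | ∃ g : CC F K, (α, β) ∈ rrel F K g}

/-- The image `t^f` of a binary relation `t` under a permutation `f` of `Ω`. -/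
def relImage (f : Equiv.Perm (Om F K)) (t : Set (Om F K × Om F K)) : Set (Om F K × Om F K) :=
  (fun p => (f p.1, f p.2)) '' t

/-- `f` is the permutation `f_{T,σ} : Kv ↦ K(T·v^σ)` of `Ω`. -/
def Implements (T : Matrix (Fin 2) (Fin 2) F) (σ : F ≃+* F) (f : Equiv.Perm (Om F K)) : Prop :=
  ∀ u v : {w : Fin 2 → F // w ≠ 0}, T.mulVec (fun i => σ (u.1 i)) = v.1 →
    f (Quotient.mk (ksetoid F K) u) = Quotient.mk (ksetoid F K) v

end Tatra

namespace TatraAux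

set_option linter.unusedSectionVars false

variable {F : Type} [Field F] [Fintype F] {K : Subgroup Fˣ}

def dtv (u w : Fin 2 → F) : F := u 0 * w 1 - u 1 * w 0

lemma dtv_zero_right (u : Fin 2 → F) : dtv u (0 : Fin 2 → F) = 0 := by simp [dtv]

lemma dtv_self (u : Fin 2 → F) : dtv u u = 0 := by simp [dtv]; ring

lemma dtv_smul_smul (a b : F) (u v : Fin 2 → F) :
    dtv (a • u) (b • v) = a * b * dtv u v := by
  simp [dtv, Pi.smul_apply, smul_eq_mul]; ring

lemma dtv_smul_right (a : F) (u v : Fin 2 → F) : dtv u (a • v) = a * dtv u v := by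
  simp [dtv, Pi.smul_apply, smul_eq_mul]; ring

lemma dtv_add_right (u v w : Fin 2 → F) : dtv u (v + w) = dtv u v + dtv u w := by
  simp [dtv, Pi.add_apply]; ring

lemma dtv_sub_right (u v w : Fin 2 → F) : dtv u (v - w) = dtv u v - dtv u w := by
  simp [dtv, Pi.sub_apply]; ring

lemma dtv_neg_swap (u v : Fin 2 → F) : dtv u v = dtv (-v) u := by
  simp [dtv, Pi.neg_apply]; ring

lemma dtv_anti (u v : Fin 2 → F) : dtv v u = - dtv u v := by simp [dtv]; ring

lemma exists_coord_ne {u : Fin 2 → F} (hu : u ≠ 0) : u 0 ≠ 0 ∨ u 1 ≠ 0 := by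
  by_contra hc
  push_neg at hc
  apply hu; funext i; fin_cases i <;> simp [hc.1, hc.2]

lemma smul_vec_ne {x : F} (hx : x ≠ 0) {u : Fin 2 → F} (hu : u ≠ 0) : x • u ≠ 0 := by
  intro h; apply hu; funext i
  have := congrFun h i
  simpa [hx] using this

lemma smul_vec_cancel {x y : F} {u : Fin 2 → F} (hu : u ≠ 0) (h : x • u = y • u) : x = y := by
  rcases exists_coord_ne hu with h0 | h0
  · have := congrFun h 0; simp [Pi.smul_apply, smul_eq_mul] at this
    exact this.resolve_right h0
  · have := congrFun h 1; simp [Pi.smul_apply, smul_eq_mul] at this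
    exact this.resolve_right h0

lemma exists_smul_of_dtv_zero {u z : Fin 2 → F} (hu : u ≠ 0) (h : dtv u z = 0) :
    ∃ t : F, z = t • u := by
  unfold dtv at h
  rcases exists_coord_ne hu with h0 | h1
  · refine ⟨z 0 * (u 0)⁻¹, ?_⟩
    funext i; fin_cases i <;> simp [Pi.smul_apply, smul_eq_mul]
    · field_simp
    · field_simp; linear_combination h
  · refine ⟨z 1 * (u 1)⁻¹, ?_⟩
    funext i; fin_cases i <;> simp [Pi.smul_apply, smul_eq_mul]
    · field_simp; linear_combination -h
    · field_simp

lemma dtv_add_left (u v w : Fin 2 → F) : dtv (u + v) w = dtv u w + dtv v w := by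
  simp [dtv, Pi.add_apply]; ring
lemma dtv_smul_left (a : F) (u v : Fin 2 → F) : dtv (a • u) v = a * dtv u v := by
  simp [dtv, Pi.smul_apply, smul_eq_mul]; ring

/-- membership of a coset of `K` (as a set of field elements). -/
def inCoset (K : Subgroup Fˣ) (g : Fˣ ⧸ K) (c : F) : Prop :=
  ∃ y : Fˣ, (QuotientGroup.mk y : Fˣ ⧸ K) = g ∧ (y : F) = c

lemma inCoset.ne_zero {g : Fˣ ⧸ K} {c : F} (h : inCoset K g c) : c ≠ 0 := by
  obtain ⟨y, _, hy⟩ := h; rw [← hy]; exact y.ne_zero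

lemma inCoset_unique {g g' : Fˣ ⧸ K} {c : F} (h : inCoset K g c) (h' : inCoset K g' c) :
    g = g' := by
  obtain ⟨y, hy, hv⟩ := h; obtain ⟨y', hy', hv'⟩ := h'
  have hyy : y = y' := Units.ext (by rw [hv, hv'])
  rw [← hy, ← hy', hyy]

lemma mk_mul_mem {x y : Fˣ} (hx : x ∈ K) :
    (QuotientGroup.mk (x * y) : Fˣ ⧸ K) = QuotientGroup.mk y := by
  apply QuotientGroup.eq.mpr
  have : (x * y)⁻¹ * y = x⁻¹ := by
    rw [_root_.mul_inv_rev, mul_comm y⁻¹ x⁻¹, mul_assoc, inv_mul_cancel, mul_one]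
  rw [this]; exact K.inv_mem hx

lemma mk_mul_mem' {x y : Fˣ} (hx : x ∈ K) :
    (QuotientGroup.mk (y * x) : Fˣ ⧸ K) = QuotientGroup.mk y := by
  rw [mul_comm]; exact mk_mul_mem hx

lemma inCoset_mul_left (y₀ : Fˣ) (g : Fˣ ⧸ K) (c : F) :
    inCoset K g ((y₀ : F) * c) ↔ inCoset K ((QuotientGroup.mk y₀ : Fˣ ⧸ K)⁻¹ * g) c := by
  constructor
  · rintro ⟨y, hy, hv⟩
    refine ⟨y₀⁻¹ * y, ?_, ?_⟩
    · rw [QuotientGroup.mk_mul, QuotientGroup.mk_inv, hy]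
    · rw [Units.val_mul, Units.val_inv_eq_inv_val]
      field_simp at hv ⊢
      linear_combination hv
  · rintro ⟨y, hy, hv⟩
    refine ⟨y₀ * y, ?_, ?_⟩
    · rw [QuotientGroup.mk_mul, hy, mul_inv_cancel_left]
    · rw [Units.val_mul, hv]

lemma card_mk_fiber (g : Fˣ ⧸ K) :
    Nat.card {y : Fˣ // (QuotientGroup.mk y : Fˣ ⧸ K) = g} = Nat.card K := by
  symm; apply Nat.card_congr
  refine Equiv.ofBijective (fun x : K => ⟨Quotient.out g * (x : Fˣ), ?_⟩) ⟨?_, ?_⟩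
  · rw [mk_mul_mem' x.2, QuotientGroup.out_eq']
  · intro x x' hxx
    have := congrArg Subtype.val hxx
    exact Subtype.ext (mul_left_cancel this)
  · rintro ⟨y, hy⟩
    have hmem : (Quotient.out g)⁻¹ * y ∈ K := by
      apply QuotientGroup.eq.mp
      rw [QuotientGroup.out_eq', hy]
    exact ⟨⟨(Quotient.out g)⁻¹ * y, hmem⟩, Subtype.ext (by simp)⟩

/-- particular solution of `dtv u w = c`. -/
noncomputable def psol (u : Fin 2 → F) (c : F) : Fin 2 → F :=
  if u 0 = 0 then ![-(c * (u 1)⁻¹), 0] else ![0, c * (u 0)⁻¹]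

lemma dtv_psol {u : Fin 2 → F} (hu : u ≠ 0) (c : F) : dtv u (psol u c) = c := by
  unfold psol
  split_ifs with h0
  · have h1 : u 1 ≠ 0 := by
      rcases exists_coord_ne hu with h | h
      · exact absurd h0 h
      · exact h
    simp [dtv]
    field_simp
  · simp [dtv]
    field_simp

lemma count1 {u : Fin 2 → F} (hu : u ≠ 0) (g : Fˣ ⧸ K) :
    Nat.card {w : Fin 2 → F // inCoset K g (dtv u w)} = Nat.card K * Fintype.card F := by
  rw [← card_mk_fiber (K := K) g, ← Nat.card_eq_fintype_card, ← Nat.card_prod]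
  symm; apply Nat.card_congr
  refine Equiv.ofBijective
    (fun p : {y : Fˣ // (QuotientGroup.mk y : Fˣ ⧸ K) = g} × F =>
      ⟨psol u (p.1.1 : F) + p.2 • u, ⟨p.1.1, p.1.2, ?_⟩⟩) ⟨?_, ?_⟩
  · rw [dtv_add_right, dtv_psol hu, dtv_smul_right, dtv_self, mul_zero, add_zero]
  · intro p p' hpp
    have hE : psol u (p.1.1 : F) + p.2 • u = psol u (p'.1.1 : F) + p'.2 • u :=
      congrArg Subtype.val hpp
    have hval : (p.1.1 : F) = (p'.1.1 : F) := by
      have := congrArg (dtv u) hE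
      rwa [dtv_add_right, dtv_psol hu, dtv_smul_right, dtv_self, mul_zero, add_zero,
        dtv_add_right, dtv_psol hu, dtv_smul_right, dtv_self, mul_zero, add_zero] at this
    have h1 : p.1 = p'.1 := Subtype.ext (Units.ext hval)
    have h2 : p.2 = p'.2 := by
      apply smul_vec_cancel hu
      rw [hval] at hE
      exact add_left_cancel hE
    exact Prod.ext h1 h2
  · rintro ⟨w, y, hy, hv⟩
    have hz : dtv u (w - psol u (y : F)) = 0 := by
      rw [dtv_sub_right, dtv_psol hu, ← hv, sub_self]
    obtain ⟨t, ht⟩ := exists_smul_of_dtv_zero hu hz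
    refine ⟨(⟨y, hy⟩, t), ?_⟩
    apply Subtype.ext
    show psol u (y : F) + t • u = w
    rw [← ht]; ring

lemma cramer_id (u v w : Fin 2 → F) (i : Fin 2) :
    dtv w v * u i + dtv u w * v i = dtv u v * w i := by
  fin_cases i <;> (simp [dtv]; ring)

lemma count2 {u v : Fin 2 → F} (hd : dtv u v ≠ 0) (h g : Fˣ ⧸ K) :
    Nat.card {w : Fin 2 → F // inCoset K h (dtv u w) ∧ inCoset K g (dtv w v)} =
      Nat.card K * Nat.card K := by
  have key1 : ∀ (a b : F), dtv u ((b * (dtv u v)⁻¹) • u + (a * (dtv u v)⁻¹) • v) = a := by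
    intro a b
    rw [dtv_add_right, dtv_smul_right, dtv_smul_right, dtv_self]
    field_simp
    ring
  have key2 : ∀ (a b : F), dtv ((b * (dtv u v)⁻¹) • u + (a * (dtv u v)⁻¹) • v) v = b := by
    intro a b
    rw [dtv_add_left, dtv_smul_left, dtv_smul_left, dtv_self, mul_zero, add_zero]
    field_simp
  have hcongr : ({y : Fˣ // (QuotientGroup.mk y : Fˣ ⧸ K) = h} ×
        {y : Fˣ // (QuotientGroup.mk y : Fˣ ⧸ K) = g}) ≃
      {w : Fin 2 → F // inCoset K h (dtv u w) ∧ inCoset K g (dtv w v)} := by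
    refine Equiv.ofBijective
      (fun p =>
        ⟨((p.2.1 : F) * (dtv u v)⁻¹) • u + ((p.1.1 : F) * (dtv u v)⁻¹) • v,
          ⟨p.1.1, p.1.2, (key1 _ _).symm⟩, ⟨p.2.1, p.2.2, (key2 _ _).symm⟩⟩) ⟨?_, ?_⟩
    · intro p p' hpp
      have hE := congrArg Subtype.val hpp
      have h1 : (p.1.1 : F) = (p'.1.1 : F) := by
        have := congrArg (dtv u) hE
        rwa [key1, key1] at this
      have h2 : (p.2.1 : F) = (p'.2.1 : F) := by
        have := congrArg (fun z => dtv z v) hE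
        simp only at this
        rwa [key2, key2] at this
      exact Prod.ext (Subtype.ext (Units.ext h1)) (Subtype.ext (Units.ext h2))
    · rintro ⟨w, ⟨y, hy, hyv⟩, ⟨y', hy', hyv'⟩⟩
      refine ⟨(⟨y, hy⟩, ⟨y', hy'⟩), ?_⟩
      apply Subtype.ext
      show ((y' : F) * (dtv u v)⁻¹) • u + ((y : F) * (dtv u v)⁻¹) • v = w
      funext i
      simp only [Pi.add_apply, Pi.smul_apply, smul_eq_mul]
      rw [hyv, hyv']
      have hc := cramer_id u v w i
      field_simp
      linear_combination hc
  rw [← Nat.card_congr hcongr, Nat.card_prod, card_mk_fiber, card_mk_fiber]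

end TatraAux

section TatraAux2

open Tatra TatraAux

variable {F : Type} [Field F] [Fintype F] {K : Subgroup Fˣ}

set_option linter.unusedSectionVars false

lemma card_classes (P : Om F K → Prop) :
    Nat.card {β : Om F K // P β} * Nat.card K =
      Nat.card {w : {w : Fin 2 → F // w ≠ 0} // P (Quotient.mk (ksetoid F K) w)} := by
  rw [← Nat.card_prod]
  apply Nat.card_congr
  have himg : ∀ (β : Om F K) (x : K),
      Quotient.mk (ksetoid F K) (⟨((x : Fˣ) : F) • (Quotient.out β).1,
        smul_vec_ne (Units.ne_zero _) (Quotient.out β).2⟩ : {w : Fin 2 → F // w ≠ 0}) = β := by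
    intro β x
    conv_rhs => rw [← Quotient.out_eq β]
    refine (Quotient.sound ?_).symm
    exact ⟨(x : Fˣ), x.2, rfl⟩
  let f : {β : Om F K // P β} × K →
      {w : {w : Fin 2 → F // w ≠ 0} // P (Quotient.mk (ksetoid F K) w)} := fun p =>
    ⟨⟨((p.2 : Fˣ) : F) • (Quotient.out p.1.1).1,
      smul_vec_ne (Units.ne_zero _) (Quotient.out p.1.1).2⟩, by rw [himg]; exact p.1.2⟩
  refine Equiv.ofBijective f ⟨?_, ?_⟩
  · intro p p' hE
    have hbb : p.1.1 = p'.1.1 := by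
      rw [← himg p.1.1 p.2, ← himg p'.1.1 p'.2]
      exact congrArg (fun z => Quotient.mk (ksetoid F K) z.1) hE
    have E2 : ((p.2 : Fˣ) : F) • (Quotient.out p.1.1).1
        = ((p'.2 : Fˣ) : F) • (Quotient.out p'.1.1).1 :=
      congrArg (fun z => z.1.1) hE
    rw [← hbb] at E2
    have hxx : ((p.2 : Fˣ) : F) = ((p'.2 : Fˣ) : F) :=
      smul_vec_cancel (Quotient.out p.1.1).2 E2
    exact Prod.ext (Subtype.ext hbb) (Subtype.ext (Units.ext hxx))
  · rintro ⟨w, hP⟩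
    obtain ⟨x, hx, hxw⟩ := Quotient.exact (Quotient.out_eq (Quotient.mk (ksetoid F K) w))
    refine ⟨(⟨Quotient.mk (ksetoid F K) w, hP⟩, ⟨x, hx⟩), ?_⟩
    apply Subtype.ext
    apply Subtype.ext
    exact hxw

lemma card_classes' (P : Om F K → Prop) (Q : (Fin 2 → F) → Prop)
    (hQ0 : ∀ w, Q w → w ≠ 0)
    (hPQ : ∀ w : {w : Fin 2 → F // w ≠ 0}, P (Quotient.mk (ksetoid F K) w) ↔ Q w.1) :
    Nat.card {β : Om F K // P β} * Nat.card K = Nat.card {w : Fin 2 → F // Q w} := by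
  rw [card_classes P]
  apply Nat.card_congr
  exact { toFun := fun p => ⟨p.1.1, (hPQ p.1).1 p.2⟩
          invFun := fun p => ⟨⟨p.1, hQ0 p.1 p.2⟩, (hPQ ⟨p.1, hQ0 p.1 p.2⟩).2 p.2⟩
          left_inv := fun p => rfl
          right_inv := fun p => rfl }

lemma dt_eq_dtv (u v : {w : Fin 2 → F // w ≠ 0}) : dt F u v = dtv u.1 v.1 := rfl

lemma mem_srel_iff (u v : {w : Fin 2 → F // w ≠ 0}) (g : CC F K) :
    (Quotient.mk (ksetoid F K) u, Quotient.mk (ksetoid F K) v) ∈ srel F K g ↔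
      inCoset K g (dtv u.1 v.1) := by
  constructor
  · rintro ⟨u', v', y, hu, hv, hy, hval⟩
    obtain ⟨x, hx, hxu⟩ := Quotient.exact hu
    obtain ⟨x', hx', hxv⟩ := Quotient.exact hv
    refine ⟨x * x' * y, (mk_mul_mem (K.mul_mem hx hx')).trans hy, ?_⟩
    rw [Units.val_mul, Units.val_mul, hval, dt_eq_dtv, ← hxu, ← hxv, dtv_smul_smul]
  · rintro ⟨y, hy, hval⟩
    exact ⟨u, v, y, rfl, rfl, hy, hval⟩

lemma mem_rrel_iff (u v : {w : Fin 2 → F // w ≠ 0}) (g : CC F K) :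
    (Quotient.mk (ksetoid F K) u, Quotient.mk (ksetoid F K) v) ∈ rrel F K g ↔
      ∃ y : Fˣ, (QuotientGroup.mk y : CC F K) = g ∧ (y : F) • u.1 = v.1 := by
  constructor
  · rintro ⟨u', v', y, hu, hv, hy, hs⟩
    obtain ⟨x, hx, hxu⟩ := Quotient.exact hu
    obtain ⟨x', hx', hxv⟩ := Quotient.exact hv
    refine ⟨x' * y * x⁻¹, ?_, ?_⟩
    · rw [mul_assoc, mk_mul_mem hx', mk_mul_mem' (K.inv_mem hx)]
      exact hy
    · rw [← hxu, ← hxv, ← hs, smul_smul, smul_smul]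
      congr 1
      rw [Units.val_mul, Units.val_mul, Units.val_inv_eq_inv_val]
      field_simp
  · rintro ⟨y, hy, hs⟩
    exact ⟨u, v, y, rfl, rfl, hy, hs⟩

lemma cc_solve {h g m : Fˣ ⧸ K} (hT : h⁻¹ * g = m) : m⁻¹ * g = h := by
  obtain ⟨a, rfl⟩ := QuotientGroup.mk_surjective h
  obtain ⟨b, rfl⟩ := QuotientGroup.mk_surjective g
  obtain ⟨c, rfl⟩ := QuotientGroup.mk_surjective m
  rw [← QuotientGroup.mk_inv, ← QuotientGroup.mk_mul] at hT ⊢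
  have h1 := QuotientGroup.eq.mp hT
  apply QuotientGroup.eq.mpr
  have e : (c⁻¹ * b)⁻¹ * a = (a⁻¹ * b)⁻¹ * c := by
    rw [_root_.mul_inv_rev, _root_.mul_inv_rev, inv_inv, inv_inv, mul_assoc, mul_assoc,
      mul_comm c a]
  rw [e]
  exact h1

lemma sum_indicator {X : Type} [Fintype X] (P : X → Prop) :
    ∑ x : X, (if P x then (1 : ℤ) else 0) = (Nat.card {x // P x} : ℤ) := by
  classical
  rw [Nat.card_eq_fintype_card, Fintype.card_subtype, Finset.sum_boole]

lemma neg_one_mem {q n : ℕ} (hq : Fintype.card F = q) (hcard : Nat.card K = (q - 1) / n)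
    (heven : Even (q * ((q - 1) / n))) : (-1 : Fˣ) ∈ K := by
  by_cases hchar : ringChar F = 2
  · haveI : CharP F 2 := hchar ▸ ringChar.charP F
    have h2 : (2 : F) = 0 := by exact_mod_cast CharP.cast_eq_zero F 2
    have h1 : (-1 : Fˣ) = 1 := Units.ext (by
      rw [Units.val_neg, Units.val_one]; linear_combination -h2)
    rw [h1]; exact K.one_mem
  · have hodd : ¬ Even q := by
      rw [← hq]
      intro hcontra
      exact hchar (FiniteField.even_card_iff_char_two.mpr (Nat.even_iff.mp hcontra))
    have hKeven : Even (Nat.card K) := by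
      rcases Nat.even_mul.mp heven with hqe | hme
      · exact absurd hqe hodd
      · rw [hcard]; exact hme
    haveI : Fact (Nat.Prime 2) := ⟨Nat.prime_two⟩
    obtain ⟨x, hx⟩ := exists_prime_orderOf_dvd_card (G := K) 2 (by
      rw [← Nat.card_eq_fintype_card]
      exact hKeven.two_dvd)
    have hx2 : x ^ 2 = 1 := by rw [← hx]; exact pow_orderOf_eq_one x
    have hx1 : x ≠ 1 := by
      intro hc; rw [hc, orderOf_one] at hx; norm_num at hx
    have hy2 : ((x : Fˣ) : F) ^ 2 = 1 := by
      have hcoe : ((x : Fˣ) : Fˣ) ^ 2 = 1 := by exact_mod_cast congrArg Subtype.val hx2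
      calc ((x : Fˣ) : F) ^ 2 = (((x : Fˣ) ^ 2 : Fˣ) : F) := by rw [Units.val_pow_eq_pow_val]
        _ = 1 := by rw [hcoe, Units.val_one]
    have hfac : (((x : Fˣ) : F) - 1) * (((x : Fˣ) : F) + 1) = 0 := by linear_combination hy2
    rcases mul_eq_zero.mp hfac with hc | hc
    · exfalso
      apply hx1
      have : ((x : Fˣ) : F) = 1 := by linear_combination hc
      exact Subtype.ext (Units.ext (by simp [this]))
    · have hv : ((x : Fˣ) : F) = -1 := by linear_combination hc
      have : (x : Fˣ) = -1 := Units.ext (by rw [hv, Units.val_neg, Units.val_one])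
      exact this ▸ x.2

end TatraAux2

open Tatra TatraAux in
/-- `B_hB_g = q·A_{h⁻¹g} + m·(J − A_C)`; every row and column sum of `A_g`
equals `1` and every row and column sum of `B_g` equals `q`. -/
theorem stmt_3 (F : Type) [Field F] [Fintype F] (K : Subgroup Fˣ) (q n : ℕ)
    (hq : Fintype.card F = q) (hn : K.index = n) (hnd : n ∣ q - 1)
    (heven : Even (q * ((q - 1) / n))) (h g : CC F K) :
    Bmat F K h * Bmat F K g
      = (q : ℤ) • Amat F K (h⁻¹ * g) + (((q - 1) / n : ℕ) : ℤ) • (Jmat F K - AC F K) ∧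
    (∀ α : Om F K, ∑ β : Om F K, Amat F K g α β = 1) ∧
    (∀ β : Om F K, ∑ α : Om F K, Amat F K g α β = 1) ∧
    (∀ α : Om F K, ∑ β : Om F K, Bmat F K g α β = (q : ℤ)) ∧
    (∀ β : Om F K, ∑ α : Om F K, Bmat F K g α β = (q : ℤ)) := by
  classical
  have hq2 : 2 ≤ q := hq ▸ Fintype.one_lt_card
  have hq1 : Nat.card Fˣ = q - 1 := by
    rw [Nat.card_eq_fintype_card, Fintype.card_units, hq]
  have hk : Nat.card K * n = q - 1 := by rw [← hn, ← hq1]; exact Subgroup.card_mul_index K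
  have hKpos : 0 < Nat.card K := Nat.card_pos
  have hn0 : 0 < n := by
    rcases Nat.eq_zero_or_pos n with h0 | hpos
    · rw [h0, mul_zero] at hk; omega
    · exact hpos
  have hm : Nat.card K = (q - 1) / n := by rw [← hk, Nat.mul_div_cancel _ hn0]
  have hneg : (-1 : Fˣ) ∈ K := neg_one_mem hq hm heven
  -- row sums of A
  have hArow : ∀ (g : CC F K) (α : Om F K), ∑ β : Om F K, Amat F K g α β = 1 := by
    intro g α
    induction α using Quotient.inductionOn with
    | h u =>
      obtain ⟨y₀, hy₀⟩ : ∃ y₀ : Fˣ, (QuotientGroup.mk y₀ : CC F K) = g :=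
        ⟨Quotient.out g, QuotientGroup.out_eq' g⟩
      set v₀ : {w : Fin 2 → F // w ≠ 0} :=
        ⟨(y₀ : F) • u.1, smul_vec_ne (Units.ne_zero y₀) u.2⟩ with hv₀def
      have hiff : ∀ β : Om F K,
          ((Quotient.mk (ksetoid F K) u, β) ∈ rrel F K g ↔
            β = Quotient.mk (ksetoid F K) v₀) := by
        intro β
        induction β using Quotient.inductionOn with
        | h v =>
          rw [mem_rrel_iff]
          constructor
          · rintro ⟨y, hy, hyv⟩
            apply Quotient.sound
            have hKy : y₀ * y⁻¹ ∈ K := by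
              have hmem : y⁻¹ * y₀ ∈ K := QuotientGroup.eq.mp (hy.trans hy₀.symm)
              rwa [mul_comm] at hmem
            refine ⟨y₀ * y⁻¹, hKy, ?_⟩
            rw [← hyv, smul_smul]
            show (((y₀ * y⁻¹ : Fˣ) : F) * (y : F)) • u.1 = (y₀ : F) • u.1
            congr 1
            rw [Units.val_mul, Units.val_inv_eq_inv_val]
            field_simp
          · intro hb
            obtain ⟨x, hx, hxv⟩ := Quotient.exact hb
            refine ⟨x⁻¹ * y₀, by rw [mk_mul_mem (K.inv_mem hx)]; exact hy₀, ?_⟩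
            have hxv' : (x : F) • v.1 = (y₀ : F) • u.1 := hxv
            have hstep : ((x : F))⁻¹ • ((x : F) • v.1) = ((x : F))⁻¹ • ((y₀ : F) • u.1) := by
              rw [hxv']
            rw [smul_smul, smul_smul, inv_mul_cancel₀ (Units.ne_zero x), one_smul] at hstep
            rw [hstep]
            congr 1
            rw [Units.val_mul, Units.val_inv_eq_inv_val]
      calc ∑ β : Om F K, Amat F K g (Quotient.mk (ksetoid F K) u) β
          = ∑ β : Om F K, if β = Quotient.mk (ksetoid F K) v₀ then (1 : ℤ) else 0 := by
            apply Finset.sum_congr rfl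
            intro β _
            simp only [Amat, Matrix.of_apply]
            exact if_congr (hiff β) rfl rfl
        _ = 1 := by simp
  -- column sums of A
  have hAcol : ∀ (g : CC F K) (β : Om F K), ∑ α : Om F K, Amat F K g α β = 1 := by
    intro g β
    induction β using Quotient.inductionOn with
    | h v =>
      obtain ⟨y₀, hy₀⟩ : ∃ y₀ : Fˣ, (QuotientGroup.mk y₀ : CC F K) = g :=
        ⟨Quotient.out g, QuotientGroup.out_eq' g⟩
      set u₀ : {w : Fin 2 → F // w ≠ 0} :=
        ⟨((y₀⁻¹ : Fˣ) : F) • v.1, smul_vec_ne (Units.ne_zero y₀⁻¹) v.2⟩ with hu₀def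
      have hiff : ∀ α : Om F K,
          ((α, Quotient.mk (ksetoid F K) v) ∈ rrel F K g ↔
            α = Quotient.mk (ksetoid F K) u₀) := by
        intro α
        induction α using Quotient.inductionOn with
        | h u =>
          rw [mem_rrel_iff]
          constructor
          · rintro ⟨y, hy, hyv⟩
            apply Quotient.sound
            have hKy : y₀⁻¹ * y ∈ K := QuotientGroup.eq.mp (hy₀.trans hy.symm)
            refine ⟨y₀⁻¹ * y, hKy, ?_⟩
            show ((y₀⁻¹ * y : Fˣ) : F) • u.1 = ((y₀⁻¹ : Fˣ) : F) • v.1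
            rw [← hyv, Units.val_mul, ← smul_smul]
          · intro hb
            obtain ⟨x, hx, hxu⟩ := Quotient.exact hb
            refine ⟨y₀ * x, by rw [mk_mul_mem' hx]; exact hy₀, ?_⟩
            have hxu' : (x : F) • u.1 = ((y₀⁻¹ : Fˣ) : F) • v.1 := hxu
            rw [Units.val_mul, ← smul_smul, hxu', smul_smul]
            rw [Units.val_inv_eq_inv_val, mul_inv_cancel₀ (Units.ne_zero y₀), one_smul]
      calc ∑ α : Om F K, Amat F K g α (Quotient.mk (ksetoid F K) v)
          = ∑ α : Om F K, if α = Quotient.mk (ksetoid F K) u₀ then (1 : ℤ) else 0 := by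
            apply Finset.sum_congr rfl
            intro α _
            simp only [Amat, Matrix.of_apply]
            exact if_congr (hiff α) rfl rfl
        _ = 1 := by simp
  -- row sums of B
  have hBrow : ∀ (g : CC F K) (α : Om F K), ∑ β : Om F K, Bmat F K g α β = (q : ℤ) := by
    intro g α
    induction α using Quotient.inductionOn with
    | h u =>
      have hcard : Nat.card {β : Om F K //
            (Quotient.mk (ksetoid F K) u, β) ∈ srel F K g} * Nat.card K = Nat.card K * q := by
        rw [card_classes' _ (fun w => inCoset K g (dtv u.1 w))
          (fun w hw => by rintro rfl; exact hw.ne_zero (dtv_zero_right u.1))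
          (fun v => mem_srel_iff u v g)]
        rw [count1 u.2 g, hq]
      have hNc : Nat.card {β : Om F K //
          (Quotient.mk (ksetoid F K) u, β) ∈ srel F K g} = q :=
        Nat.eq_of_mul_eq_mul_right hKpos (hcard.trans (mul_comm _ _))
      simp only [Bmat, Matrix.of_apply]
      rw [sum_indicator, hNc]
  -- column sums of B
  have hBcol : ∀ (g : CC F K) (β : Om F K), ∑ α : Om F K, Bmat F K g α β = (q : ℤ) := by
    intro g β
    induction β using Quotient.inductionOn with
    | h v =>
      have hcard : Nat.card {α : Om F K //
            (α, Quotient.mk (ksetoid F K) v) ∈ srel F K g} * Nat.card K = Nat.card K * q := by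
        rw [card_classes' _ (fun w => inCoset K g (dtv (-v.1) w))
          (fun w hw => by rintro rfl; exact hw.ne_zero (dtv_zero_right (-v.1)))
          (fun u => (mem_srel_iff u v g).trans (by rw [dtv_neg_swap]))]
        rw [count1 (neg_ne_zero.mpr v.2) g, hq]
      have hNc : Nat.card {α : Om F K //
          (α, Quotient.mk (ksetoid F K) v) ∈ srel F K g} = q :=
        Nat.eq_of_mul_eq_mul_right hKpos (hcard.trans (mul_comm _ _))
      simp only [Bmat, Matrix.of_apply]
      rw [sum_indicator, hNc]
  refine ⟨?_, hArow g, hAcol g, hBrow g, hBcol g⟩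
  -- the product identity
  ext α β
  induction α using Quotient.inductionOn with
  | h u =>
  induction β using Quotient.inductionOn with
  | h v =>
  have hL : (Bmat F K h * Bmat F K g) (Quotient.mk (ksetoid F K) u) (Quotient.mk (ksetoid F K) v)
      = (Nat.card {γ : Om F K // (Quotient.mk (ksetoid F K) u, γ) ∈ srel F K h ∧
          (γ, Quotient.mk (ksetoid F K) v) ∈ srel F K g} : ℤ) := by
    rw [Matrix.mul_apply, ← sum_indicator]
    apply Finset.sum_congr rfl
    intro γ _
    simp only [Bmat, Matrix.of_apply]
    by_cases h1 : (Quotient.mk (ksetoid F K) u, γ) ∈ srel F K h <;>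
      by_cases h2 : (γ, Quotient.mk (ksetoid F K) v) ∈ srel F K g <;>
      simp [h1, h2]
  have hR : ((q : ℤ) • Amat F K (h⁻¹ * g) + (((q - 1) / n : ℕ) : ℤ) • (Jmat F K - AC F K))
        (Quotient.mk (ksetoid F K) u) (Quotient.mk (ksetoid F K) v)
      = (q : ℤ) * (if (Quotient.mk (ksetoid F K) u, Quotient.mk (ksetoid F K) v) ∈
            rrel F K (h⁻¹ * g) then 1 else 0)
        + (((q - 1) / n : ℕ) : ℤ) * (1 - ∑ g' : CC F K,
            if (Quotient.mk (ksetoid F K) u, Quotient.mk (ksetoid F K) v) ∈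
              rrel F K g' then (1 : ℤ) else 0) := by
    simp only [Matrix.add_apply, Matrix.smul_apply, Matrix.sub_apply, Matrix.sum_apply,
      AC, Jmat, Amat, Matrix.of_apply, smul_eq_mul]
  rw [hL, hR]
  have hcc : Nat.card {γ : Om F K // (Quotient.mk (ksetoid F K) u, γ) ∈ srel F K h ∧
        (γ, Quotient.mk (ksetoid F K) v) ∈ srel F K g} * Nat.card K
      = Nat.card {w : Fin 2 → F // inCoset K h (dtv u.1 w) ∧ inCoset K g (dtv w v.1)} :=
    card_classes' _ _
      (fun w hw => by rintro rfl; exact hw.1.ne_zero (dtv_zero_right _))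
      (fun wv => and_congr (mem_srel_iff u wv h)
        ((mem_srel_iff wv v g)))
  by_cases hd : dtv u.1 v.1 = 0
  · -- dependent case
    obtain ⟨t, ht⟩ := exists_smul_of_dtv_zero u.2 hd
    have ht0 : t ≠ 0 := by
      rintro rfl
      exact v.2 (by rw [ht, zero_smul])
    set μ : Fˣ := Units.mk0 t ht0 with hμdef
    have hμval : (μ : F) = t := rfl
    have hrr : ∀ g' : CC F K,
        ((Quotient.mk (ksetoid F K) u, Quotient.mk (ksetoid F K) v) ∈ rrel F K g' ↔
          g' = QuotientGroup.mk μ) := by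
      intro g'
      rw [mem_rrel_iff]
      constructor
      · rintro ⟨y, hy, hyv⟩
        have hyt : (y : F) = t := smul_vec_cancel u.2 (hyv.trans ht)
        rw [← hy]
        exact congrArg _ (Units.ext (hyt.trans hμval.symm))
      · rintro rfl
        exact ⟨μ, rfl, by rw [hμval, ← ht]⟩
    have hS : (∑ g' : CC F K,
        if (Quotient.mk (ksetoid F K) u, Quotient.mk (ksetoid F K) v) ∈ rrel F K g'
        then (1 : ℤ) else 0) = 1 := by
      rw [Finset.sum_congr rfl (fun g' _ => if_congr (hrr g') rfl rfl)]
      simp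
    have hQ : ∀ w : Fin 2 → F,
        ((inCoset K h (dtv u.1 w) ∧ inCoset K g (dtv w v.1)) ↔
         (inCoset K h (dtv u.1 w) ∧
            inCoset K ((QuotientGroup.mk μ : CC F K)⁻¹ * g) (dtv u.1 w))) := by
      intro w
      have e1 : dtv w v.1 = ((-μ : Fˣ) : F) * dtv u.1 w := by
        rw [ht, dtv_smul_right, dtv_anti u.1 w, Units.val_neg, hμval]
        ring
      rw [e1, inCoset_mul_left (-μ)]
      have hmk : (QuotientGroup.mk (-μ) : CC F K) = QuotientGroup.mk μ := by
        rw [← neg_one_mul]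
        exact mk_mul_mem hneg
      rw [hmk]
    by_cases hT : h⁻¹ * g = QuotientGroup.mk μ
    · have hcos : (QuotientGroup.mk μ : CC F K)⁻¹ * g = h := cc_solve hT
      have hQ2 : ∀ w : Fin 2 → F,
          ((inCoset K h (dtv u.1 w) ∧ inCoset K g (dtv w v.1)) ↔
            inCoset K h (dtv u.1 w)) := by
        intro w
        rw [hQ w, hcos, and_self]
      have hN : Nat.card {γ : Om F K // (Quotient.mk (ksetoid F K) u, γ) ∈ srel F K h ∧
            (γ, Quotient.mk (ksetoid F K) v) ∈ srel F K g} * Nat.card K = Nat.card K * q := by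
        rw [hcc, Nat.card_congr (Equiv.subtypeEquivRight hQ2), count1 u.2 h, hq]
      have hN' : Nat.card {γ : Om F K // (Quotient.mk (ksetoid F K) u, γ) ∈ srel F K h ∧
            (γ, Quotient.mk (ksetoid F K) v) ∈ srel F K g} = q :=
        Nat.eq_of_mul_eq_mul_right hKpos (hN.trans (mul_comm _ _))
      rw [hN', hS, if_pos ((hrr _).mpr hT)]
      push_cast
      ring
    · have hempty : IsEmpty {w : Fin 2 → F //
          inCoset K h (dtv u.1 w) ∧ inCoset K g (dtv w v.1)} := by
        refine ⟨fun p => ?_⟩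
        obtain ⟨w, hw⟩ := p
        rw [hQ w] at hw
        apply hT
        have heq := inCoset_unique hw.1 hw.2
        exact cc_solve heq.symm
      have hNz : Nat.card {γ : Om F K // (Quotient.mk (ksetoid F K) u, γ) ∈ srel F K h ∧
            (γ, Quotient.mk (ksetoid F K) v) ∈ srel F K g} * Nat.card K = 0 := by
        rw [hcc]
        exact @Nat.card_of_isEmpty _ hempty
      have hN' : Nat.card {γ : Om F K // (Quotient.mk (ksetoid F K) u, γ) ∈ srel F K h ∧
            (γ, Quotient.mk (ksetoid F K) v) ∈ srel F K g} = 0 := by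
        rcases Nat.mul_eq_zero.mp hNz with h0 | h0
        · exact h0
        · omega
      rw [hN', hS, if_neg (fun hmem => hT ((hrr _).mp hmem))]
      push_cast
      ring
  · -- independent case
    have hN : Nat.card {γ : Om F K // (Quotient.mk (ksetoid F K) u, γ) ∈ srel F K h ∧
          (γ, Quotient.mk (ksetoid F K) v) ∈ srel F K g} = Nat.card K :=
      Nat.eq_of_mul_eq_mul_right hKpos (hcc.trans (count2 hd h g))
    have hnr : ∀ g' : CC F K,
        (Quotient.mk (ksetoid F K) u, Quotient.mk (ksetoid F K) v) ∉ rrel F K g' := by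
      intro g' hg'
      obtain ⟨y, _, hyv⟩ := (mem_rrel_iff u v g').mp hg'
      apply hd
      rw [← hyv, dtv_smul_right, dtv_self, mul_zero]
    have hS : (∑ g' : CC F K,
        if (Quotient.mk (ksetoid F K) u, Quotient.mk (ksetoid F K) v) ∈ rrel F K g'
        then (1 : ℤ) else 0) = 0 :=
      Finset.sum_eq_zero (fun g' _ => if_neg (hnr g'))
    rw [hN, hS, if_neg (hnr _), hm]
    push_cast
    ring
end

section
/- Assume n ≥ 3. Suppose f is a permutation of Ω with r_g^f = r_g and s_g^f = s_g for all g ∈ C, and suppose f fixes every line Cα setwise. If n is odd then f is the identity. If n is even then f is the identity or the permutation α ↦ hα, where h is the unique element of order 2 of C; moreover, when n is even, the permutation α ↦ hα does fix every r_g, every s_g, and every line setwise. -/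
open Classical Matrix

/-- Pin a single canonical `CommGroup` structure on `Fˣ ⧸ K` so that instance resolution
is consistent between `*`, `1`, `⁻¹` etc. -/
instance (priority := 10000) ccCommGroup (F : Type) [Field F] (K : Subgroup Fˣ) :
    CommGroup (Fˣ ⧸ K) := QuotientGroup.Quotient.commGroup K

namespace Tatra8

open Tatra

variable {F : Type} [Field F] [Fintype F] {K : Subgroup Fˣ}

abbrev V (F : Type) [Field F] := {w : Fin 2 → F // w ≠ 0}

/-- shorthand for the quotient map. -/
abbrev qk (u : V F) : Om F K := Quotient.mk (ksetoid F K) u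

lemma smul_ne (y : Fˣ) (u : V F) : (y : F) • u.1 ≠ 0 := fun h => u.2 (by simpa using h)

/-- scalar action of units on nonzero vectors. -/
def vs (y : Fˣ) (u : V F) : V F := ⟨(y : F) • u.1, smul_ne y u⟩

lemma vs_vs (y z : Fˣ) (u : V F) : vs y (vs z u) = vs (y * z) u := by
  apply Subtype.ext
  show (y : F) • (z : F) • u.1 = ((y * z : Fˣ) : F) • u.1
  rw [smul_smul, Units.val_mul]

lemma vs_one (u : V F) : vs 1 u = u := by
  apply Subtype.ext; show ((1 : Fˣ) : F) • u.1 = u.1; simp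

lemma rrel_iff (g : CC F K) (u v : V F) :
    ((qk u, qk v) : Om F K × Om F K) ∈ rrel F K g ↔
      ∃ y : Fˣ, (QuotientGroup.mk y : CC F K) = g ∧ (y : F) • u.1 = v.1 := by
  constructor
  · rintro ⟨u', v', y, h1, h2, h3, h4⟩
    obtain ⟨x1, hx1, hxu⟩ := Quotient.exact h1
    obtain ⟨x2, hx2, hxv⟩ := Quotient.exact h2
    refine ⟨x2 * y * x1⁻¹, ?_, ?_⟩
    · rw [← h3]
      symm
      rw [QuotientGroup.eq]
      have he : y⁻¹ * (x2 * y * x1⁻¹) = x2 * x1⁻¹ := by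
        rw [mul_comm x2 y]; group
      rw [he]
      exact K.mul_mem hx2 (K.inv_mem hx1)
    · rw [← hxu, ← hxv, ← h4, smul_smul, smul_smul]
      congr 1
      have he : (x2 * y * x1⁻¹) * x1 = x2 * y := by group
      rw [← Units.val_mul, he, Units.val_mul]
  · rintro ⟨y, hy, hyv⟩
    exact ⟨u, v, y, rfl, rfl, hy, hyv⟩

lemma rrel_intro {g : CC F K} {y : Fˣ} (hy : (QuotientGroup.mk y : CC F K) = g) (u : V F) :
    ((qk u, qk (vs y u)) : Om F K × Om F K) ∈ rrel F K g :=
  (rrel_iff g u (vs y u)).2 ⟨y, hy, rfl⟩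

lemma rrel_snd {g : CC F K} {u : V F} {β : Om F K} (h : ((qk u, β) : Om F K × Om F K) ∈ rrel F K g) :
    ∃ y : Fˣ, (QuotientGroup.mk y : CC F K) = g ∧ β = qk (vs y u) := by
  obtain ⟨v, hv⟩ := Quotient.exists_rep β
  rw [← hv] at h ⊢
  obtain ⟨y, hy, hyv⟩ := (rrel_iff g u v).1 h
  exact ⟨y, hy, by rw [show v = vs y u from Subtype.ext hyv.symm]⟩

lemma qk_eq_qk {u v : V F} : (qk u : Om F K) = qk v ↔ ∃ x : Fˣ, x ∈ K ∧ (x : F) • u.1 = v.1 :=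
  ⟨fun h => Quotient.exact h, fun h => Quotient.sound h⟩

lemma qk_vs_eq {y z : Fˣ} (h : (QuotientGroup.mk y : CC F K) = QuotientGroup.mk z) (u : V F) :
    (qk (vs y u) : Om F K) = qk (vs z u) := by
  rw [QuotientGroup.eq] at h
  refine qk_eq_qk.2 ⟨z * y⁻¹, by rw [mul_comm]; exact h, ?_⟩
  show ((z * y⁻¹ : Fˣ) : F) • ((y : F) • u.1) = (z : F) • u.1
  rw [smul_smul, ← Units.val_mul, mul_assoc, inv_mul_cancel, mul_one]

lemma rrel_g_unique {g g' : CC F K} {α β : Om F K} (h : (α, β) ∈ rrel F K g)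
    (h' : (α, β) ∈ rrel F K g') : g = g' := by
  obtain ⟨u, hu⟩ := Quotient.exists_rep α
  obtain ⟨v, hv⟩ := Quotient.exists_rep β
  rw [← hu, ← hv] at h h'
  obtain ⟨y, hy, hyv⟩ := (rrel_iff (K := K) g u v).1 h
  obtain ⟨z, hz, hzv⟩ := (rrel_iff (K := K) g' u v).1 h'
  obtain ⟨i, hi⟩ : ∃ i, u.1 i ≠ 0 := Function.ne_iff.1 u.2
  have : (y : F) = (z : F) := by
    have h1 := congrFun hyv i
    have h2 := congrFun hzv i
    simp only [Pi.smul_apply, smul_eq_mul] at h1 h2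
    exact mul_right_cancel₀ hi (h1.trans h2.symm)
  rw [← hy, ← hz, Units.ext this]

lemma rrel_b_unique {g : CC F K} {α β β' : Om F K} (h : (α, β) ∈ rrel F K g)
    (h' : (α, β') ∈ rrel F K g) : β = β' := by
  obtain ⟨u, hu⟩ := Quotient.exists_rep α
  rw [← hu] at h h'
  obtain ⟨y, hy, hyv⟩ := rrel_snd h
  obtain ⟨z, hz, hzv⟩ := rrel_snd h'
  rw [hyv, hzv, qk_vs_eq (hy.trans hz.symm)]

lemma rrel_comp {g g' : CC F K} {α β γ : Om F K} (h : (α, β) ∈ rrel F K g)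
    (h' : (β, γ) ∈ rrel F K g') : (α, γ) ∈ rrel F K (g * g') := by
  obtain ⟨u, hu⟩ := Quotient.exists_rep α
  rw [← hu] at h ⊢
  obtain ⟨y, hy, hyv⟩ := rrel_snd h
  rw [hyv] at h'
  obtain ⟨z, hz, hzv⟩ := rrel_snd h'
  rw [hzv, vs_vs]
  exact rrel_intro (by rw [QuotientGroup.mk_mul, hy, hz]; exact mul_comm g' g) u

lemma rrel_one_self (α : Om F K) : (α, α) ∈ rrel F K 1 := by
  obtain ⟨u, hu⟩ := Quotient.exists_rep α
  rw [← hu]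
  have := rrel_intro (g := (1 : CC F K)) (y := 1) (QuotientGroup.mk_one K) u
  rwa [vs_one] at this

lemma rrel_symm {g : CC F K} {α β : Om F K} (h : (α, β) ∈ rrel F K g) :
    (β, α) ∈ rrel F K g⁻¹ := by
  obtain ⟨u, hu⟩ := Quotient.exists_rep α
  rw [← hu] at h ⊢
  obtain ⟨y, hy, hyv⟩ := rrel_snd h
  rw [hyv]
  have := rrel_intro (g := g⁻¹) (y := y⁻¹) (by rw [← hy]; rfl) (vs y u)
  rwa [vs_vs, inv_mul_cancel, vs_one] at this

lemma srel_iff (g : CC F K) (u v : V F) :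
    ((qk u, qk v) : Om F K × Om F K) ∈ srel F K g ↔
      ∃ y : Fˣ, (QuotientGroup.mk y : CC F K) = g ∧ (y : F) = dt F u v := by
  constructor
  · rintro ⟨u', v', y, h1, h2, h3, h4⟩
    obtain ⟨x1, hx1, hxu⟩ := Quotient.exact h1
    obtain ⟨x2, hx2, hxv⟩ := Quotient.exact h2
    refine ⟨x1 * x2 * y, ?_, ?_⟩
    · rw [← h3]
      symm
      rw [QuotientGroup.eq]
      have he : y⁻¹ * (x1 * x2 * y) = x1 * x2 := by
        rw [mul_comm (x1 * x2) y]; group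
      rw [he]
      exact K.mul_mem hx1 hx2
    · have hdt : dt F u v = (x1 : F) * (x2 : F) * dt F u' v' := by
        simp only [dt, ← hxu, ← hxv, Pi.smul_apply, smul_eq_mul]
        ring
      rw [hdt, ← h4, Units.val_mul, Units.val_mul]
  · rintro ⟨y, hy, hyv⟩
    exact ⟨u, v, y, rfl, rfl, hy, hyv⟩

lemma srel_g_unique {g g' : CC F K} {α β : Om F K} (h : (α, β) ∈ srel F K g)
    (h' : (α, β) ∈ srel F K g') : g = g' := by
  obtain ⟨u, hu⟩ := Quotient.exists_rep α
  obtain ⟨v, hv⟩ := Quotient.exists_rep β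
  rw [← hu, ← hv] at h h'
  obtain ⟨y, hy, hyv⟩ := (srel_iff (K := K) g u v).1 h
  obtain ⟨z, hz, hzv⟩ := (srel_iff (K := K) g' u v).1 h'
  rw [← hy, ← hz, Units.ext (hyv.trans hzv.symm)]

lemma dt_vs (a b : Fˣ) (u v : V F) : dt F (vs a u) (vs b v) = (a : F) * (b : F) * dt F u v := by
  simp only [dt, vs, Pi.smul_apply, smul_eq_mul]
  ring

end Tatra8

namespace Tatra8
open Tatra
variable {F : Type} [Field F]

def ee1 : V F := ⟨![1, 0], fun h => by simpa using congrFun h 0⟩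
def ee2 : V F := ⟨![0, 1], fun h => by simpa using congrFun h 1⟩
def ee3 : V F := ⟨![1, 1], fun h => by simpa using congrFun h 0⟩

end Tatra8

namespace Tatra8
open Tatra
variable {F : Type} [Field F] [Fintype F] {K : Subgroup Fˣ}

lemma order_two_unique (a b : CC F K) (ha : a * a = 1) (ha1 : a ≠ 1) (hb : b * b = 1)
    (hb1 : b ≠ 1) : a = b := by
  classical
  haveI : IsCyclic (CC F K) :=
    isCyclic_of_surjective (QuotientGroup.mk' K) (QuotientGroup.mk'_surjective K)
  by_contra hab
  have hsub : ({1, a, b} : Finset (CC F K)) ⊆ Finset.univ.filter (fun x => x ^ 2 = 1) := by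
    intro x hx
    simp only [Finset.mem_insert, Finset.mem_singleton] at hx
    rcases hx with rfl | rfl | rfl <;> simp [Finset.mem_filter, sq, ha, hb]
  have h3 : ({1, a, b} : Finset (CC F K)).card = 3 := by
    rw [Finset.card_insert_of_notMem (by simp [Ne.symm ha1, Ne.symm hb1]),
        Finset.card_insert_of_notMem (by simp [hab]), Finset.card_singleton]
  have h4 := (Finset.card_le_card hsub).trans (IsCyclic.card_pow_eq_one_le (by norm_num))
  omega

end Tatra8

open Tatra8

open Tatra in
/-- kernel of the action on lines: assume `n ≥ 3` and let `f` be a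
permutation of `Ω` fixing every `r_g`, every `s_g`, and every line setwise. If `n` is odd
then `f = id`; if `n` is even then `f = id` or `f` is the permutation `α ↦ hα` for the
unique element `h` of order `2` of `C`; moreover, for even `n`, any permutation
`α ↦ hα` does fix every `r_g`, every `s_g`, and every line setwise. -/
theorem stmt_8 (F : Type) [Field F] [Fintype F] (K : Subgroup Fˣ) (q n : ℕ)
    (hq : Fintype.card F = q) (hn : K.index = n) (hnd : n ∣ q - 1)
    (heven : Even (q * ((q - 1) / n))) (hn3 : 3 ≤ n)
    (f : Equiv.Perm (Om F K))
    (hr : ∀ g : CC F K, relImage F K f (rrel F K g) = rrel F K g)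
    (hs : ∀ g : CC F K, relImage F K f (srel F K g) = srel F K g)
    (hl : ∀ α : Om F K, (fun β => f β) '' line F K α = line F K α) :
    (Odd n → f = Equiv.refl (Om F K)) ∧
    (Even n → ∀ h : CC F K, orderOf h = 2 →
      (f = Equiv.refl (Om F K) ∨ ∀ α : Om F K, (α, f α) ∈ rrel F K h) ∧
      (∀ f' : Equiv.Perm (Om F K), (∀ α : Om F K, (α, f' α) ∈ rrel F K h) →
        (∀ g : CC F K, relImage F K f' (rrel F K g) = rrel F K g) ∧
        (∀ g : CC F K, relImage F K f' (srel F K g) = srel F K g) ∧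
        (∀ α : Om F K, (fun β => f' β) '' line F K α = line F K α))) := by
  classical
  have hfl : ∀ α : Om F K, ∃ g : CC F K, (α, f α) ∈ rrel F K g := by
    intro α
    have h1 : f α ∈ line F K α := by
      rw [← hl α]; exact ⟨α, ⟨1, rrel_one_self α⟩, rfl⟩
    exact h1
  choose c hc using hfl
  have hsf : ∀ (g : CC F K) (α β), (α, β) ∈ srel F K g → (f α, f β) ∈ srel F K g := by
    intro g α β hab
    have h1 : (f α, f β) ∈ relImage F K f (srel F K g) := ⟨(α, β), hab, rfl⟩
    rwa [hs g] at h1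
  have key : ∀ u v : V F, dt F u v ≠ 0 → c (qk u) * c (qk v) = 1 := by
    intro u v hd
    set yd : Fˣ := Units.mk0 (dt F u v) hd with hyd
    have h1 : ((qk u : Om F K), qk v) ∈ srel F K (QuotientGroup.mk yd) :=
      (srel_iff _ u v).2 ⟨yd, rfl, rfl⟩
    have h2 := hsf _ _ _ h1
    obtain ⟨a, ha, hfa⟩ := rrel_snd (hc (qk u))
    obtain ⟨b, hb, hfb⟩ := rrel_snd (hc (qk v))
    rw [hfa, hfb] at h2
    obtain ⟨z, hz, hzd⟩ := (srel_iff _ _ _).1 h2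
    have hz2 : z = a * b * yd := by
      apply Units.ext
      rw [hzd, dt_vs, Units.val_mul, Units.val_mul]
      rfl
    rw [hz2] at hz
    have h3 : (QuotientGroup.mk a * QuotientGroup.mk b : CC F K) * QuotientGroup.mk yd
        = QuotientGroup.mk yd := by
      rw [← QuotientGroup.mk_mul, ← QuotientGroup.mk_mul]; exact hz
    have h4 := mul_eq_right.1 h3
    rw [ha, hb] at h4
    exact h4
  have cancel : ∀ x y : CC F K, x * y = 1 → y * y = 1 → x = y := by
    intro x y hxy hyy
    calc x = x * (y * y) := by rw [hyy, mul_one]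
    _ = (x * y) * y := by rw [mul_assoc]
    _ = y := by rw [hxy, one_mul]
  have k12 : c (qk (ee1 : V F)) * c (qk ee2) = 1 := key _ _ (by norm_num [dt, ee1, ee2])
  have k13 : c (qk (ee1 : V F)) * c (qk ee3) = 1 := key _ _ (by norm_num [dt, ee1, ee3])
  have k23 : c (qk (ee2 : V F)) * c (qk ee3) = 1 := key _ _ (by norm_num [dt, ee2, ee3])
  have hc2 : c (qk (ee2 : V F)) = c (qk (ee3 : V F)) :=
    mul_left_cancel (k12.trans k13.symm)
  rw [← hc2] at k23
  have h1eq : c (qk (ee1 : V F)) = c (qk (ee2 : V F)) := cancel _ _ k12 k23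
  have hh0 : c (qk (ee1 : V F)) * c (qk (ee1 : V F)) = 1 := by rw [h1eq]; exact k23
  have hall : ∀ α : Om F K, c α = c (qk (ee1 : V F)) := by
    intro α
    obtain ⟨u, hu⟩ := Quotient.exists_rep α
    rw [← hu]
    by_cases h0c : u.1 0 = 0
    · have h1c : u.1 1 ≠ 0 := by
        intro h1c
        apply u.2
        funext i
        fin_cases i <;> assumption
      exact cancel _ _ (key u ee1 (by simp [dt, ee1, h0c, h1c])) hh0
    · exact (cancel _ _ (key u ee2 (by simp [dt, ee2, h0c])) k23).trans h1eq.symm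
  have hfh : ∀ α : Om F K, (α, f α) ∈ rrel F K (c (qk (ee1 : V F))) :=
    fun α => hall α ▸ hc α
  have hid : c (qk (ee1 : V F)) = 1 → f = Equiv.refl (Om F K) := by
    intro h1
    apply Equiv.ext
    intro α
    have h2 := hfh α
    rw [h1] at h2
    exact rrel_b_unique h2 (rrel_one_self α)
  constructor
  · intro hodd
    apply hid
    have hd2 : orderOf (c (qk (ee1 : V F))) ∣ 2 :=
      orderOf_dvd_of_pow_eq_one (by rw [sq]; exact hh0)
    have hdn : orderOf (c (qk (ee1 : V F))) ∣ n := by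
      have h5 := orderOf_dvd_natCard (c (qk (ee1 : V F)))
      rwa [show Nat.card (CC F K) = n from hn] at h5
    rcases (Nat.dvd_prime Nat.prime_two).1 hd2 with h1 | h2
    · exact orderOf_eq_one_iff.1 h1
    · exfalso
      have h6 : (2 : ℕ) ∣ n := h2 ▸ hdn
      rw [Nat.odd_iff] at hodd
      omega
  · intro _ h hh2
    have hhmul : h * h = 1 := by
      have h5 := pow_orderOf_eq_one h; rwa [hh2, sq] at h5
    have hh1 : h ≠ 1 := by
      intro e; rw [e, orderOf_one] at hh2; omega
    constructor
    · by_cases hc1 : c (qk (ee1 : V F)) = 1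
      · exact Or.inl (hid hc1)
      · refine Or.inr fun α => ?_
        have h5 : c (qk (ee1 : V F)) = h := order_two_unique _ _ hh0 hc1 hhmul hh1
        exact h5 ▸ hfh α
    · intro f' hf'
      have hinv : ∀ α, f' (f' α) = α := by
        intro α
        have h1 := rrel_comp (hf' α) (hf' (f' α))
        rw [hhmul] at h1
        exact rrel_b_unique h1 (rrel_one_self α)
      have hstep : ∀ (g : CC F K) (α β), (α, β) ∈ rrel F K g → (f' α, f' β) ∈ rrel F K g := by
        intro g α β hab
        have h1 := rrel_symm (hf' α)
        have h2 := rrel_comp h1 hab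
        have h3 := rrel_comp h2 (hf' β)
        have he : h⁻¹ * g * h = g := by
          rw [mul_comm h⁻¹ g, mul_assoc, inv_mul_cancel, mul_one]
        rwa [he] at h3
      have hstep' : ∀ (g : CC F K) (α β), (α, β) ∈ srel F K g → (f' α, f' β) ∈ srel F K g := by
        intro g α β hab
        obtain ⟨u, hu⟩ := Quotient.exists_rep α
        obtain ⟨v, hv⟩ := Quotient.exists_rep β
        rw [← hu, ← hv] at hab ⊢
        obtain ⟨y, hy, hyd⟩ := (srel_iff g u v).1 hab
        obtain ⟨a, ha, hfa⟩ := rrel_snd (hf' (qk u))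
        obtain ⟨b, hb, hfb⟩ := rrel_snd (hf' (qk v))
        rw [hfa, hfb]
        refine (srel_iff g _ _).2 ⟨a * b * y, ?_, ?_⟩
        · rw [QuotientGroup.mk_mul, QuotientGroup.mk_mul, ha, hb, hy, hhmul, one_mul]
        · rw [dt_vs, ← hyd, Units.val_mul, Units.val_mul]
      refine ⟨?_, ?_, ?_⟩
      · intro g
        apply Set.Subset.antisymm
        · rintro p ⟨t, ht, rfl⟩
          exact hstep g t.1 t.2 ht
        · intro p hp
          exact ⟨(f' p.1, f' p.2), hstep g p.1 p.2 hp, by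
            show (f' (f' p.1), f' (f' p.2)) = p
            rw [hinv, hinv]⟩
      · intro g
        apply Set.Subset.antisymm
        · rintro p ⟨t, ht, rfl⟩
          exact hstep' g t.1 t.2 ht
        · intro p hp
          exact ⟨(f' p.1, f' p.2), hstep' g p.1 p.2 hp, by
            show (f' (f' p.1), f' (f' p.2)) = p
            rw [hinv, hinv]⟩
      · intro α
        apply Set.Subset.antisymm
        · rintro β ⟨γ, ⟨g, hg⟩, rfl⟩
          exact ⟨g * h, rrel_comp hg (hf' γ)⟩
        · rintro β ⟨g, hg⟩
          exact ⟨f' β, ⟨g * h, rrel_comp hg (hf' β)⟩, hinv β⟩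
end

section
/- For all h,g ∈ C there exists a bijection f of Ω with s_h^f = s_g; that is, the graphs (Ω, s_h) and (Ω, s_g) are isomorphic. -/
open Classical Matrix

namespace TatraAux

variable {F : Type} [Field F] [Fintype F] {K : Subgroup Fˣ}

def phi (c : Fˣ) (u : {w : Fin 2 → F // w ≠ 0}) : {w : Fin 2 → F // w ≠ 0} :=
  ⟨fun i => (if i = 0 then (c : F) else 1) * u.1 i, by
    intro hzero
    apply u.2
    funext i
    have hi := congrFun hzero i
    simp only [Pi.zero_apply] at hi
    rcases mul_eq_zero.1 hi with h | h
    · split_ifs at h with h0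
      · exact absurd h c.ne_zero
      · exact absurd h one_ne_zero
    · exact h⟩

lemma phi_phi_inv (c : Fˣ) (u : {w : Fin 2 → F // w ≠ 0}) : phi c (phi c⁻¹ u) = u := by
  apply Subtype.ext
  funext i
  simp only [phi]
  split_ifs with h0
  · rw [← mul_assoc]
    norm_cast
    rw [mul_inv_cancel]
    simp
  · ring

lemma phi_inv_phi (c : Fˣ) (u : {w : Fin 2 → F // w ≠ 0}) : phi c⁻¹ (phi c u) = u := by
  have := phi_phi_inv (F := F) c⁻¹ u
  rwa [inv_inv] at this

lemma phi_compat (c : Fˣ) (u v : {w : Fin 2 → F // w ≠ 0})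
    (h : (Tatra.ksetoid F K).r u v) : (Tatra.ksetoid F K).r (phi c u) (phi c v) := by
  obtain ⟨x, hx, hxy⟩ := h
  refine ⟨x, hx, ?_⟩
  funext i
  have := congrFun hxy i
  simp only [phi, Pi.smul_apply, smul_eq_mul] at this ⊢
  rw [← this]; ring

def fmap (K : Subgroup Fˣ) (c : Fˣ) : Tatra.Om F K → Tatra.Om F K :=
  Quotient.map (phi c) (phi_compat c)

lemma fmap_mk (c : Fˣ) (u : {w : Fin 2 → F // w ≠ 0}) :
    fmap K c (Quotient.mk (Tatra.ksetoid F K) u) = Quotient.mk (Tatra.ksetoid F K) (phi c u) :=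
  rfl

def fperm (K : Subgroup Fˣ) (c : Fˣ) : Equiv.Perm (Tatra.Om F K) where
  toFun := fmap K c
  invFun := fmap K c⁻¹
  left_inv := by
    intro x
    induction x using Quotient.ind with
    | _ u => show Quotient.mk _ (phi c⁻¹ (phi c u)) = _; rw [phi_inv_phi]
  right_inv := by
    intro x
    induction x using Quotient.ind with
    | _ u => show Quotient.mk _ (phi c (phi c⁻¹ u)) = _; rw [phi_phi_inv]

lemma dt_phi (c : Fˣ) (u v : {w : Fin 2 → F // w ≠ 0}) :
    Tatra.dt F (phi c u) (phi c v) = (c : F) * Tatra.dt F u v := by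
  simp only [Tatra.dt, phi]
  norm_num
  ring

lemma key (c : Fˣ) (h : Tatra.CC F K) :
    Tatra.relImage F K (fperm K c) (Tatra.srel F K h) ⊆
      Tatra.srel F K (QuotientGroup.mk c * h) := by
  rintro p ⟨q, ⟨u, v, y, hu, hv, hy, hd⟩, rfl⟩
  refine ⟨phi c u, phi c v, c * y, ?_, ?_, ?_, ?_⟩
  · show _ = fperm K c q.1
    rw [← hu]; rfl
  · show _ = fperm K c q.2
    rw [← hv]; rfl
  · rw [← hy]; rfl
  · rw [dt_phi, ← hd]; push_cast; ring

lemma fperm_round (c : Fˣ) (x : Tatra.Om F K) : fperm K c (fperm K c⁻¹ x) = x := by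
  induction x using Quotient.ind with
  | _ u => show Quotient.mk _ (phi c (phi c⁻¹ u)) = _; rw [phi_phi_inv]

end TatraAux

open Tatra in
/-- for all `h, g ∈ C` there is a bijection `f` of `Ω` with `s_h^f = s_g`,
i.e. the graphs `(Ω, s_h)` and `(Ω, s_g)` are isomorphic. -/
theorem stmt_9 (F : Type) [Field F] [Fintype F] (K : Subgroup Fˣ) (q n : ℕ)
    (hq : Fintype.card F = q) (hn : K.index = n) (hnd : n ∣ q - 1)
    (heven : Even (q * ((q - 1) / n))) (h g : CC F K) :
    ∃ f : Equiv.Perm (Om F K), relImage F K f (srel F K h) = srel F K g := by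
  
  obtain ⟨c, hc⟩ := QuotientGroup.mk_surjective (g * h⁻¹)
  refine ⟨TatraAux.fperm K c, Set.Subset.antisymm ?_ ?_⟩
  · have := TatraAux.key (K := K) c h
    rwa [hc, inv_mul_cancel_right] at this
  · intro p hp
    have hq : (TatraAux.fperm K c⁻¹ p.1, TatraAux.fperm K c⁻¹ p.2) ∈ srel F K h := by
      have h1 : (TatraAux.fperm K c⁻¹ p.1, TatraAux.fperm K c⁻¹ p.2) ∈
          Tatra.relImage F K (TatraAux.fperm K c⁻¹) (srel F K g) := ⟨p, hp, rfl⟩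
      have h2 := TatraAux.key (K := K) c⁻¹ g h1
      have h3 : (QuotientGroup.mk c⁻¹ : CC F K) * g = h := by
        have : (QuotientGroup.mk c⁻¹ : CC F K) = (QuotientGroup.mk c : CC F K)⁻¹ := rfl
        have h4 : (QuotientGroup.mk c : CC F K) * h = g := by
          rw [hc, inv_mul_cancel_right]
        rw [this, ← h4, ← mul_assoc, inv_mul_cancel]
        exact one_mul h
      rwa [h3] at h2
    refine ⟨(TatraAux.fperm K c⁻¹ p.1, TatraAux.fperm K c⁻¹ p.2), hq, ?_⟩
    simp only [Prod.ext_iff]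
    exact ⟨TatraAux.fperm_round c p.1, TatraAux.fperm_round c p.2⟩
end

section
/- For each g ∈ C and any two pairs (α₁,α₂) and (β₁,β₂) both belonging to r_g (respectively, both belonging to s_g), there exists an invertible 2×2 matrix T over F with det(T) ∈ K such that the permutation f_{T,id} maps α₁ to β₁ and α₂ to β₂. Consequently every basic relation r_g and s_g is a single orbit of the automorphism group of the Tatra scheme acting on Ω×Ω, i.e. the Tatra scheme is schurian. -/
open Classical Matrix

namespace TatraAux
open Tatra

set_option linter.unusedSectionVars false
variable {F : Type} [Field F] [Fintype F] {K : Subgroup Fˣ}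

abbrev Vnz (F : Type) [Field F] := {w : Fin 2 → F // w ≠ 0}

lemma mulVec_ne_zero {T : Matrix (Fin 2) (Fin 2) F} (hT : IsUnit T.det)
    (v : Vnz F) : T.mulVec v.1 ≠ 0 := by
  intro h
  have hinj : Function.Injective T.mulVec :=
    Matrix.mulVec_injective_iff_isUnit.mpr ((Matrix.isUnit_iff_isUnit_det T).mpr hT)
  exact v.2 (hinj (by simpa using h))

/-- The map `Kv ↦ K(Tv)` on `Ω`. -/
noncomputable def tmap (T : Matrix (Fin 2) (Fin 2) F) (hT : IsUnit T.det) :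
    Om F K → Om F K :=
  Quotient.map (fun v => ⟨T.mulVec v.1, mulVec_ne_zero hT v⟩)
    (by
      rintro u v ⟨x, hx, h⟩
      exact ⟨x, hx, by simp only [← h, Matrix.mulVec_smul]⟩)

lemma tmap_mk (T : Matrix (Fin 2) (Fin 2) F) (hT : IsUnit T.det) (u : Vnz F) :
    tmap (K := K) T hT (Quotient.mk (ksetoid F K) u)
      = Quotient.mk (ksetoid F K) ⟨T.mulVec u.1, mulVec_ne_zero hT u⟩ := rfl

lemma tmap_inj (T : Matrix (Fin 2) (Fin 2) F) (hT : IsUnit T.det) :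
    Function.Injective (tmap (K := K) T hT) := by
  have hinj : Function.Injective T.mulVec :=
    Matrix.mulVec_injective_iff_isUnit.mpr ((Matrix.isUnit_iff_isUnit_det T).mpr hT)
  intro a b h
  induction a using Quotient.ind with | _ u =>
  induction b using Quotient.ind with | _ v =>
  rw [tmap_mk, tmap_mk] at h
  obtain ⟨x, hx, hxe⟩ := Quotient.exact h
  refine Quotient.sound ⟨x, hx, ?_⟩
  apply hinj
  simpa [Matrix.mulVec_smul] using hxe

/-- The permutation `f_{T,id}` of `Ω`. -/
noncomputable def tperm (T : Matrix (Fin 2) (Fin 2) F) (hT : IsUnit T.det) :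
    Equiv.Perm (Om F K) :=
  Equiv.ofBijective (tmap T hT) (Finite.injective_iff_bijective.mp (tmap_inj T hT))

lemma tperm_implements (T : Matrix (Fin 2) (Fin 2) F) (hT : IsUnit T.det) :
    Implements F K T (RingEquiv.refl F) (tperm T hT) := by
  intro u v h
  rw [show (tperm (K := K) T hT) (Quotient.mk (ksetoid F K) u)
      = tmap T hT (Quotient.mk (ksetoid F K) u) from rfl, tmap_mk]
  congr 1
  exact Subtype.ext (by simpa using h)

lemma implements_apply {T : Matrix (Fin 2) (Fin 2) F} (hT : IsUnit T.det)
    {f : Equiv.Perm (Om F K)} (hf : Implements F K T (RingEquiv.refl F) f) (u : Vnz F) :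
    f (Quotient.mk (ksetoid F K) u)
      = Quotient.mk (ksetoid F K) ⟨T.mulVec u.1, mulVec_ne_zero hT u⟩ :=
  hf u ⟨T.mulVec u.1, mulVec_ne_zero hT u⟩ (by simp)

lemma dt_mulVec (T : Matrix (Fin 2) (Fin 2) F) (hT : IsUnit T.det) (u v : Vnz F) :
    dt F ⟨T.mulVec u.1, mulVec_ne_zero hT u⟩ ⟨T.mulVec v.1, mulVec_ne_zero hT v⟩
      = T.det * dt F u v := by
  simp only [dt, Matrix.mulVec, dotProduct, Matrix.det_fin_two, Fin.sum_univ_two]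
  ring

/-- forward preservation of r_c -/
lemma pres_r {T : Matrix (Fin 2) (Fin 2) F} (hT : IsUnit T.det)
    {f : Equiv.Perm (Om F K)} (hf : Implements F K T (RingEquiv.refl F) f)
    (c : CC F K) {α β : Om F K} (h : (α, β) ∈ rrel F K c) :
    (f α, f β) ∈ rrel F K c := by
  obtain ⟨u, v, y, hu, hv, hy, hyuv⟩ := h
  replace hu : Quotient.mk (ksetoid F K) u = α := hu
  replace hv : Quotient.mk (ksetoid F K) v = β := hv
  refine ⟨⟨T.mulVec u.1, mulVec_ne_zero hT u⟩, ⟨T.mulVec v.1, mulVec_ne_zero hT v⟩, y,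
    ?_, ?_, hy, ?_⟩
  · show _ = f α
    rw [← hu]; exact (implements_apply hT hf u).symm
  · show _ = f β
    rw [← hv]; exact (implements_apply hT hf v).symm
  · show (y : F) • T.mulVec u.1 = T.mulVec v.1
    rw [← Matrix.mulVec_smul, hyuv]

/-- forward preservation of s_c, needs `det T ∈ K` -/
lemma pres_s {T : Matrix (Fin 2) (Fin 2) F} {k : Fˣ} (hk : k ∈ K) (hkT : (k : F) = T.det)
    {f : Equiv.Perm (Om F K)} (hf : Implements F K T (RingEquiv.refl F) f)
    (c : CC F K) {α β : Om F K} (h : (α, β) ∈ srel F K c) :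
    (f α, f β) ∈ srel F K c := by
  have hT : IsUnit T.det := hkT ▸ k.isUnit
  obtain ⟨u, v, y, hu, hv, hy, hyuv⟩ := h
  replace hu : Quotient.mk (ksetoid F K) u = α := hu
  replace hv : Quotient.mk (ksetoid F K) v = β := hv
  refine ⟨⟨T.mulVec u.1, mulVec_ne_zero hT u⟩, ⟨T.mulVec v.1, mulVec_ne_zero hT v⟩, k * y,
    ?_, ?_, ?_, ?_⟩
  · show _ = f α
    rw [← hu]; exact (implements_apply hT hf u).symm
  · show _ = f β
    rw [← hv]; exact (implements_apply hT hf v).symm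
  · rw [← hy]
    refine QuotientGroup.eq.mpr ?_
    have hkey : (k * y)⁻¹ * y = k⁻¹ := by
      rw [_root_.mul_inv_rev, mul_assoc, mul_comm k⁻¹ y, ← mul_assoc, inv_mul_cancel, one_mul]
    rw [hkey]; exact K.inv_mem hk
  · show ((k : Fˣ) * y : Fˣ).val = _
    rw [dt_mulVec T hT u v, Units.val_mul, hkT, hyuv]

/-- column matrix with columns `a`, `b` -/
def cmat (a b : Fin 2 → F) : Matrix (Fin 2) (Fin 2) F :=
  Matrix.of ![![a 0, b 0], ![a 1, b 1]]

lemma cmat_det (a b : Fin 2 → F) : (cmat a b).det = a 0 * b 1 - a 1 * b 0 := by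
  simp [cmat, Matrix.det_fin_two]; ring

lemma cmat_mulVec_e0 (a b : Fin 2 → F) : (cmat a b).mulVec ![1, 0] = a := by
  funext i
  fin_cases i <;> simp [cmat, Matrix.mulVec, dotProduct, Fin.sum_univ_two]

lemma cmat_mulVec_e1 (a b : Fin 2 → F) : (cmat a b).mulVec ![0, 1] = b := by
  funext i
  fin_cases i <;> simp [cmat, Matrix.mulVec, dotProduct, Fin.sum_univ_two]

lemma transporter (u a v b : Vnz F) (d d' : Fˣ)
    (hd : (d : F) = dt F u a) (hd' : (d' : F) = dt F v b) :
    ∃ T : Matrix (Fin 2) (Fin 2) F, T.det = (d' : F) * (d : F)⁻¹ ∧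
      T.mulVec u.1 = v.1 ∧ T.mulVec a.1 = b.1 := by
  set B := cmat u.1 a.1 with hBdef
  set A := cmat v.1 b.1 with hAdef
  have hBdet : B.det = (d : F) := by rw [hBdef, cmat_det, hd]; rfl
  have hAdet : A.det = (d' : F) := by rw [hAdef, cmat_det, hd']; rfl
  have hB : IsUnit B.det := hBdet ▸ d.isUnit
  have hBu : B⁻¹.mulVec u.1 = ![1, 0] := by
    conv_lhs => rw [← cmat_mulVec_e0 u.1 a.1, ← hBdef]
    rw [Matrix.mulVec_mulVec, Matrix.nonsing_inv_mul B hB, Matrix.one_mulVec]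
  have hBa : B⁻¹.mulVec a.1 = ![0, 1] := by
    conv_lhs => rw [← cmat_mulVec_e1 u.1 a.1, ← hBdef]
    rw [Matrix.mulVec_mulVec, Matrix.nonsing_inv_mul B hB, Matrix.one_mulVec]
  refine ⟨A * B⁻¹, ?_, ?_, ?_⟩
  · rw [Matrix.det_mul, Matrix.det_nonsing_inv, Ring.inverse_eq_inv', hAdet, hBdet]
  · rw [← Matrix.mulVec_mulVec, hBu, cmat_mulVec_e0]
  · rw [← Matrix.mulVec_mulVec, hBa, cmat_mulVec_e1]

lemma exists_compl (u : Vnz F) : ∃ w : Vnz F, dt F u w = 1 := by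
  by_cases h0 : u.1 0 ≠ 0
  · refine ⟨⟨![0, (u.1 0)⁻¹], fun h => inv_ne_zero h0 (by simpa using congrFun h 1)⟩, ?_⟩
    simp [dt, mul_inv_cancel₀ h0]
  · push_neg at h0
    have h1 : u.1 1 ≠ 0 := by
      intro h1
      apply u.2
      funext i; fin_cases i <;> simpa
    refine ⟨⟨![-(u.1 1)⁻¹, 0], fun h => inv_ne_zero h1 (by simpa using congrFun h 0)⟩, ?_⟩
    simp [dt, mul_inv_cancel₀ h1]

lemma fixes_rels {T : Matrix (Fin 2) (Fin 2) F} {k : Fˣ} (hk : k ∈ K) (hkT : (k : F) = T.det)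
    {f : Equiv.Perm (Om F K)} (hf : Implements F K T (RingEquiv.refl F) f) :
    (∀ c : CC F K, relImage F K f (rrel F K c) = rrel F K c) ∧
    (∀ c : CC F K, relImage F K f (srel F K c) = srel F K c) := by
  have hT : IsUnit T.det := hkT ▸ k.isUnit
  have hinj : Function.Injective (fun p : Om F K × Om F K => (f p.1, f p.2)) := fun p q h => by
    simp only [Prod.mk.injEq] at h
    exact Prod.ext (f.injective h.1) (f.injective h.2)
  constructor <;> intro c
  · refine Set.eq_of_subset_of_ncard_le ?_ ?_
    · rintro p ⟨⟨a1, a2⟩, hq, rfl⟩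
      exact pres_r hT hf c hq
    · rw [relImage, Set.ncard_image_of_injective _ hinj]
  · refine Set.eq_of_subset_of_ncard_le ?_ ?_
    · rintro p ⟨⟨a1, a2⟩, hq, rfl⟩
      exact pres_s hk hkT hf c hq
    · rw [relImage, Set.ncard_image_of_injective _ hinj]

lemma part_r (g : CC F K) (α₁ α₂ β₁ β₂ : Om F K)
    (h1 : (α₁, α₂) ∈ rrel F K g) (h2 : (β₁, β₂) ∈ rrel F K g) :
    ∃ (T : Matrix (Fin 2) (Fin 2) F) (f : Equiv.Perm (Om F K)),
      (∃ y : Fˣ, y ∈ K ∧ (y : F) = T.det) ∧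
      Implements F K T (RingEquiv.refl F) f ∧ f α₁ = β₁ ∧ f α₂ = β₂ := by
  obtain ⟨u, a, y, hu, ha, hy, hya⟩ := h1
  obtain ⟨v, b, y', hv, hb, hy', hy'b⟩ := h2
  replace hu : Quotient.mk (ksetoid F K) u = α₁ := hu
  replace ha : Quotient.mk (ksetoid F K) a = α₂ := ha
  replace hv : Quotient.mk (ksetoid F K) v = β₁ := hv
  replace hb : Quotient.mk (ksetoid F K) b = β₂ := hb
  obtain ⟨w, hw⟩ := exists_compl u
  obtain ⟨w', hw'⟩ := exists_compl v
  obtain ⟨T, hTdet, hTu, _⟩ := transporter u w v w' 1 1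
    (by rw [hw, Units.val_one]) (by rw [hw', Units.val_one])
  have hT : IsUnit T.det := by rw [hTdet]; simp
  refine ⟨T, tperm T hT, ⟨1, K.one_mem, by simp [hTdet]⟩, tperm_implements T hT, ?_, ?_⟩
  · rw [← hu, ← hv, implements_apply hT (tperm_implements T hT) u]
    exact congrArg _ (Subtype.ext hTu)
  · rw [← ha, ← hb, implements_apply hT (tperm_implements T hT) a]
    refine Quotient.sound ⟨y' * y⁻¹, ?_, ?_⟩
    · rw [mul_comm]; exact QuotientGroup.eq.mp (hy.trans hy'.symm)
    · show ((y' * y⁻¹ : Fˣ) : F) • T.mulVec a.1 = b.1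
      have hyy : (y' * y⁻¹ : Fˣ) * y = y' := by rw [mul_assoc, inv_mul_cancel, mul_one]
      rw [← hya, Matrix.mulVec_smul, hTu, ← hy'b, smul_smul, ← Units.val_mul, hyy]

lemma part_s (g : CC F K) (α₁ α₂ β₁ β₂ : Om F K)
    (h1 : (α₁, α₂) ∈ srel F K g) (h2 : (β₁, β₂) ∈ srel F K g) :
    ∃ (T : Matrix (Fin 2) (Fin 2) F) (f : Equiv.Perm (Om F K)),
      (∃ y : Fˣ, y ∈ K ∧ (y : F) = T.det) ∧
      Implements F K T (RingEquiv.refl F) f ∧ f α₁ = β₁ ∧ f α₂ = β₂ := by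
  obtain ⟨u, a, y, hu, ha, hy, hya⟩ := h1
  obtain ⟨v, b, y', hv, hb, hy', hy'b⟩ := h2
  replace hu : Quotient.mk (ksetoid F K) u = α₁ := hu
  replace ha : Quotient.mk (ksetoid F K) a = α₂ := ha
  replace hv : Quotient.mk (ksetoid F K) v = β₁ := hv
  replace hb : Quotient.mk (ksetoid F K) b = β₂ := hb
  obtain ⟨T, hTdet, hTu, hTa⟩ := transporter u a v b y y' hya hy'b
  have hkT : ((y' * y⁻¹ : Fˣ) : F) = T.det := by
    rw [hTdet, Units.val_mul, Units.val_inv_eq_inv_val]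
  have hk : (y' * y⁻¹ : Fˣ) ∈ K := by
    rw [mul_comm]; exact K.inv_mem (QuotientGroup.eq.mp (hy'.trans hy.symm))
  have hT : IsUnit T.det := hkT ▸ (y' * y⁻¹).isUnit
  refine ⟨T, tperm T hT, ⟨y' * y⁻¹, hk, hkT⟩, tperm_implements T hT, ?_, ?_⟩
  · rw [← hu, ← hv, implements_apply hT (tperm_implements T hT) u]
    exact congrArg _ (Subtype.ext hTu)
  · rw [← ha, ← hb, implements_apply hT (tperm_implements T hT) a]
    exact congrArg _ (Subtype.ext hTa)

end TatraAux

open Tatra in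
/-- for each `g ∈ C`, the group of permutations `f_{T,id}` with
`det T ∈ K` is transitive on `r_g` and on `s_g`; consequently each basic relation is a
single orbit of the automorphism group of the Tatra scheme, i.e. the scheme is schurian. -/
theorem stmt_11 (F : Type) [Field F] [Fintype F] (K : Subgroup Fˣ) (q n : ℕ)
    (hq : Fintype.card F = q) (hn : K.index = n) (hnd : n ∣ q - 1)
    (heven : Even (q * ((q - 1) / n))) (g : CC F K) :
    (∀ α₁ α₂ β₁ β₂ : Om F K, (α₁, α₂) ∈ rrel F K g → (β₁, β₂) ∈ rrel F K g →
      ∃ (T : Matrix (Fin 2) (Fin 2) F) (f : Equiv.Perm (Om F K)),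
        (∃ y : Fˣ, y ∈ K ∧ (y : F) = T.det) ∧
        Implements F K T (RingEquiv.refl F) f ∧ f α₁ = β₁ ∧ f α₂ = β₂) ∧
    (∀ α₁ α₂ β₁ β₂ : Om F K, (α₁, α₂) ∈ srel F K g → (β₁, β₂) ∈ srel F K g →
      ∃ (T : Matrix (Fin 2) (Fin 2) F) (f : Equiv.Perm (Om F K)),
        (∃ y : Fˣ, y ∈ K ∧ (y : F) = T.det) ∧
        Implements F K T (RingEquiv.refl F) f ∧ f α₁ = β₁ ∧ f α₂ = β₂) ∧
    (∀ α₁ α₂ β₁ β₂ : Om F K, (α₁, α₂) ∈ rrel F K g → (β₁, β₂) ∈ rrel F K g →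
      ∃ f : Equiv.Perm (Om F K),
        (∀ c : CC F K, relImage F K f (rrel F K c) = rrel F K c) ∧
        (∀ c : CC F K, relImage F K f (srel F K c) = srel F K c) ∧
        f α₁ = β₁ ∧ f α₂ = β₂) ∧
    (∀ α₁ α₂ β₁ β₂ : Om F K, (α₁, α₂) ∈ srel F K g → (β₁, β₂) ∈ srel F K g →
      ∃ f : Equiv.Perm (Om F K),
        (∀ c : CC F K, relImage F K f (rrel F K c) = rrel F K c) ∧
        (∀ c : CC F K, relImage F K f (srel F K c) = srel F K c) ∧
        f α₁ = β₁ ∧ f α₂ = β₂) := by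
  refine ⟨TatraAux.part_r g, TatraAux.part_s g, ?_, ?_⟩
  · intro α₁ α₂ β₁ β₂ h1 h2
    obtain ⟨T, f, ⟨k, hk, hkT⟩, himpl, hf1, hf2⟩ := TatraAux.part_r g α₁ α₂ β₁ β₂ h1 h2
    obtain ⟨hr, hs⟩ := TatraAux.fixes_rels hk hkT himpl
    exact ⟨f, hr, hs, hf1, hf2⟩
  · intro α₁ α₂ β₁ β₂ h1 h2
    obtain ⟨T, f, ⟨k, hk, hkT⟩, himpl, hf1, hf2⟩ := TatraAux.part_s g α₁ α₂ β₁ β₂ h1 h2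
    obtain ⟨hr, hs⟩ := TatraAux.fixes_rels hk hkT himpl
    exact ⟨f, hr, hs, hf1, hf2⟩
end

section
/- Let r and p be primes and let d be a positive even integer. Then 4(r^d − 1) ≠ p(p − 3). Equivalently, if q = r^d is a power of a prime r and q − 1 = p(p−3)/4 for a prime p, then d is odd. -/
/-- for primes `r`, `p` and a positive even integer `d`,
`4(r^d − 1) ≠ p(p − 3)`; equivalently, if `q = r^d` is a prime power with
`q − 1 = p(p−3)/4` for a prime `p`, then `d` is odd. -/
theorem stmt_18 (r p d : ℕ) (hr : r.Prime) (hp : p.Prime) (hd : 0 < d)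
    (hde : Even d) : 4 * (r ^ d - 1) ≠ p * (p - 3) := by
  intro h
  obtain ⟨e, he⟩ := hde
  subst he
  have he1 : 1 ≤ e := by omega
  have hr2 : 2 ≤ r := hr.two_le
  have hn2 : 2 ≤ r ^ e := le_trans hr2 (Nat.le_self_pow (by omega) r)
  have hrd : r ^ (e + e) = (r ^ e) * (r ^ e) := by ring
  rw [hrd] at h
  have h1 : 1 ≤ r ^ e * r ^ e := by nlinarith
  have hsq : 4 ≤ r ^ e * r ^ e := Nat.mul_le_mul hn2 hn2
  -- dispose of small p
  rcases lt_or_ge p 4 with hp4 | hp4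
  · interval_cases p <;> omega
  have h3 : 3 ≤ p := by omega
  -- move to ℤ
  have hz : (4 : ℤ) * ((r:ℤ)^e * (r:ℤ)^e - 1) = (p:ℤ) * ((p:ℤ) - 3) := by
    have := congrArg (Nat.cast : ℕ → ℤ) h
    push_cast [Nat.cast_sub h1, Nat.cast_sub h3] at this ⊢
    linarith
  set x : ℤ := (r : ℤ) ^ e with hx
  have hx2 : (2 : ℤ) ≤ x := by rw [hx]; exact_mod_cast hn2
  have hp4' : (4 : ℤ) ≤ (p : ℤ) := by exact_mod_cast hp4
  have key : (4*x - (2*(p:ℤ) - 3)) * (4*x + (2*(p:ℤ) - 3)) = 7 := by linear_combination 4 * hz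
  rcases le_or_gt (4*x - (2*(p:ℤ) - 3)) 0 with ha | ha
  · nlinarith [key]
  · have ha1 : (1:ℤ) ≤ 4*x - (2*(p:ℤ) - 3) := ha
    nlinarith [key]
end
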